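/- arXiv:2501.16924 — 5 statements merged into one kernel-verified Lean document; each statement's English description precedes it below -/
import Mathlib

section
/- Let a ∈ (−2,0), b ∈ (0,2), and let ε₂ ∈ ℝ satisfy ε₂² < 4b(a+2). Then the function h(z) = (1/z)·( 2/(a+2) − 2/((a+2) + ε₂z + bz²) ) − 2z/((a+2)z² + ε₂z + b), which extends continuously to z = 0 (with value 2ε₂/(a+2)²), satisfies ∫_{−1}^{1} h(z) dz = 2πε₂/((a+2)·√(4b(a+2) − ε₂²)). -/
open MeasureTheory Real

lemma arctan_pair {u v : ℝ} (h : 0 < u + v) :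
    arctan u + arctan v = π / 2 - arctan ((1 - u * v) / (u + v)) := by
  have hs1 : 0 < arctan u + arctan v := by
    have h1 : arctan (-v) < arctan u := arctan_strictMono (by linarith)
    rw [arctan_neg] at h1; linarith
  have hs2 : arctan u + arctan v < π := by
    have h1 := arctan_lt_pi_div_two u
    have h2 := arctan_lt_pi_div_two v
    linarith
  set s := arctan u + arctan v with hs
  have hcu : (0:ℝ) < Real.sqrt (1 + u^2) := Real.sqrt_pos.2 (by positivity)
  have hcv : (0:ℝ) < Real.sqrt (1 + v^2) := Real.sqrt_pos.2 (by positivity)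
  have hcos : Real.cos s = (1 - u*v) / (Real.sqrt (1+u^2) * Real.sqrt (1+v^2)) := by
    rw [hs, Real.cos_add, Real.cos_arctan, Real.sin_arctan, Real.cos_arctan, Real.sin_arctan]
    field_simp
  have hsin : Real.sin s = (u + v) / (Real.sqrt (1+u^2) * Real.sqrt (1+v^2)) := by
    rw [hs, Real.sin_add, Real.cos_arctan, Real.sin_arctan, Real.cos_arctan, Real.sin_arctan]
    field_simp
  have htan : Real.tan (π/2 - s) = (1 - u*v)/(u+v) := by
    rw [Real.tan_pi_div_two_sub, Real.tan_eq_sin_div_cos, inv_div, hsin, hcos]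
    rw [div_div_div_cancel_right₀]
    exact (mul_pos hcu hcv).ne'
  have harc := Real.arctan_tan (x := π/2 - s) (by linarith) (by linarith)
  rw [htan] at harc
  linarith

lemma quad_deriv (p q r z : ℝ) : HasDerivAt (fun z => p*z^2 + q*z + r) (2*p*z + q) z := by
  have h := (((hasDerivAt_pow 2 z).const_mul p).add ((hasDerivAt_id z).const_mul q)).add_const r
  refine h.congr_deriv ?_
  simp [mul_comm]
  ring

lemma arctan_term_simp {B D q : ℝ} (hB : B ≠ 0) (hD : D ≠ 0) (hq : q ≠ 0) :
    1 / (4*B*q/D^2) * (2*B/D) = D/(2*q) := by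
  field_simp
  ring

lemma deriv_combine {A B E D q1 q2 : ℝ} (z : ℝ) (hA : A ≠ 0) (hD : D ≠ 0)
    (hq1 : q1 ≠ 0) (hq2 : q2 ≠ 0) :
    2*(E + B*z)/(A*q1) - 2*z/q2 =
      A⁻¹ * ((2*B*z+E)/q1 - (2*A*z+E)/q2) + 2*E/(A*D) * (D/(2*q1) + D/(2*q2)) := by
  field_simp
  ring

lemma quad_pos {p q r : ℝ} (hp : 0 < p) (h : q^2 < 4*p*r) (z : ℝ) :
    0 < p*z^2 + q*z + r := by
  nlinarith [sq_nonneg (2*p*z + q), sq_nonneg z]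

set_option maxHeartbeats 2000000 in
/-- for `a ∈ (−2,0)`, `b ∈ (0,2)` and `ε₂² < 4b(a+2)`, the function
`h(z) = (1/z)·(2/(a+2) − 2/((a+2) + ε₂z + bz²)) − 2z/((a+2)z² + ε₂z + b)`, extended at
`z = 0` by the value `2ε₂/(a+2)²`, is continuous and satisfies
`∫_{−1}^{1} h(z) dz = 2πε₂/((a+2)·√(4b(a+2) − ε₂²))`. -/
theorem stmt_10 (a b e2 : ℝ) (ha1 : -2 < a) (ha2 : a < 0) (hb1 : 0 < b) (hb2 : b < 2)
    (h2 : e2 ^ 2 < 4 * b * (a + 2)) :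
    let h : ℝ → ℝ := fun z =>
      if z = 0 then 2 * e2 / (a + 2) ^ 2
      else (1 / z) * (2 / (a + 2) - 2 / ((a + 2) + e2 * z + b * z ^ 2)) -
        2 * z / ((a + 2) * z ^ 2 + e2 * z + b)
    Continuous h ∧
    ∫ z in (-1 : ℝ)..1, h z =
      2 * π * e2 / ((a + 2) * Real.sqrt (4 * b * (a + 2) - e2 ^ 2)) := by
  intro h
  have hA : (0:ℝ) < a + 2 := by linarith
  have hq1 : ∀ z : ℝ, 0 < b*z^2 + e2*z + (a+2) := quad_pos hb1 (by nlinarith)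
  have hq2 : ∀ z : ℝ, 0 < (a+2)*z^2 + e2*z + b := quad_pos hA (by nlinarith)
  set Δ := Real.sqrt (4 * b * (a + 2) - e2 ^ 2) with hΔdef
  have hΔ : 0 < Δ := Real.sqrt_pos.2 (by linarith)
  have hΔ2 : Δ^2 = 4 * b * (a + 2) - e2 ^ 2 := Real.sq_sqrt (by linarith)
  set g : ℝ → ℝ := fun z =>
    2*(e2 + b*z)/((a+2)*(b*z^2 + e2*z + (a+2))) - 2*z/((a+2)*z^2 + e2*z + b) with hg
  have hhg : h = g := by
    funext z
    by_cases hz : z = 0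
    · simp only [h, hz, if_pos rfl, hg]
      field_simp
      simp
      field_simp
    · simp only [h, if_neg hz, hg]
      have h1 : (a+2) + e2*z + b*z^2 ≠ 0 := by have := hq1 z; intro hc; nlinarith
      have h2' : (a+2)*z^2 + e2*z + b ≠ 0 := (hq2 z).ne'
      have h3 : b*z^2 + e2*z + (a+2) ≠ 0 := (hq1 z).ne'
      field_simp
      have h4 : a + 2 + z*e2 + z^2*b ≠ 0 := by convert h1 using 1; ring
      have h5 : z*(z*(a+2)+e2)+b ≠ 0 := by convert h2' using 1; ring
      have h6 : z*(z*b+e2)+(a+2) ≠ 0 := by convert h3 using 1; ring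
      field_simp
      ring
  have hgc : Continuous g := by
    apply Continuous.sub
    · exact Continuous.div (by continuity) (by continuity) fun z => (mul_pos hA (hq1 z)).ne'
    · exact Continuous.div (by continuity) (by continuity) fun z => (hq2 z).ne'
  refine ⟨hhg ▸ hgc, ?_⟩
  rw [hhg]
  set F : ℝ → ℝ := fun z =>
    (a+2)⁻¹ * (Real.log (b*z^2 + e2*z + (a+2)) - Real.log ((a+2)*z^2 + e2*z + b)) +
    (2*e2/((a+2)*Δ)) * (Real.arctan ((2*b*z+e2)/Δ) + Real.arctan ((2*(a+2)*z+e2)/Δ)) with hF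
  have hderiv : ∀ z : ℝ, HasDerivAt F (g z) z := by
    intro z
    have d1 : HasDerivAt (fun z => Real.log (b*z^2+e2*z+(a+2)))
        ((2*b*z+e2)/(b*z^2+e2*z+(a+2))) z := (quad_deriv b e2 (a+2) z).log (hq1 z).ne'
    have d2 : HasDerivAt (fun z => Real.log ((a+2)*z^2+e2*z+b))
        ((2*(a+2)*z+e2)/((a+2)*z^2+e2*z+b)) z := (quad_deriv (a+2) e2 b z).log (hq2 z).ne'
    have l1 : HasDerivAt (fun z : ℝ => (2*b*z+e2)/Δ) (2*b/Δ) z := by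
      have := (((hasDerivAt_id z).const_mul (2*b)).add_const e2).div_const Δ
      simpa using this
    have l2 : HasDerivAt (fun z : ℝ => (2*(a+2)*z+e2)/Δ) (2*(a+2)/Δ) z := by
      have := (((hasDerivAt_id z).const_mul (2*(a+2))).add_const e2).div_const Δ
      simpa using this
    have d3 := l1.arctan
    have d4 := l2.arctan
    have e1 : 1 + ((2*b*z+e2)/Δ)^2 = 4*b*(b*z^2+e2*z+(a+2))/Δ^2 := by
      field_simp
      linear_combination hΔ2
    have e2' : 1 + ((2*(a+2)*z+e2)/Δ)^2 = 4*(a+2)*((a+2)*z^2+e2*z+b)/Δ^2 := by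
      field_simp
      linear_combination hΔ2
    have t1 : 1 / (1 + ((2*b*z+e2)/Δ)^2) * (2*b/Δ) = Δ/(2*(b*z^2+e2*z+(a+2))) := by
      rw [e1]
      exact arctan_term_simp hb1.ne' hΔ.ne' (hq1 z).ne'
    have t2 : 1 / (1 + ((2*(a+2)*z+e2)/Δ)^2) * (2*(a+2)/Δ)
        = Δ/(2*((a+2)*z^2+e2*z+b)) := by
      rw [e2']
      exact arctan_term_simp hA.ne' hΔ.ne' (hq2 z).ne'
    have hD := ((d1.sub d2).const_mul (a+2)⁻¹).add ((d3.add d4).const_mul (2*e2/((a+2)*Δ)))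
    rw [t1, t2] at hD
    refine hD.congr_deriv ?_
    simp only [hg]
    exact (deriv_combine z hA.ne' hΔ.ne' (hq1 z).ne' (hq2 z).ne').symm
  have hint : ∫ z in (-1:ℝ)..1, g z = F 1 - F (-1) :=
    intervalIntegral.integral_eq_sub_of_hasDerivAt (fun z _ => hderiv z)
      (hgc.intervalIntegrable _ _)
  rw [hint]
  have key : arctan ((2*b+e2)/Δ) + arctan ((2*b-e2)/Δ)
      + (arctan ((2*(a+2)+e2)/Δ) + arctan ((2*(a+2)-e2)/Δ)) = π := by
    have p1 : 0 < (2*b+e2)/Δ + (2*b-e2)/Δ := by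
      have hx : (2*b+e2)/Δ + (2*b-e2)/Δ = 4*b/Δ := by ring
      rw [hx]; positivity
    have p2 : 0 < (2*(a+2)+e2)/Δ + (2*(a+2)-e2)/Δ := by
      have hx : (2*(a+2)+e2)/Δ + (2*(a+2)-e2)/Δ = 4*(a+2)/Δ := by ring
      rw [hx]; positivity
    rw [arctan_pair p1, arctan_pair p2]
    have e3 : (1 - (2*b+e2)/Δ * ((2*b-e2)/Δ)) / ((2*b+e2)/Δ + (2*b-e2)/Δ)
        = ((a+2)-b)/Δ := by
      rw [div_eq_div_iff (by positivity) hΔ.ne']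
      field_simp
      linear_combination hΔ2
    have e4 : (1 - (2*(a+2)+e2)/Δ * ((2*(a+2)-e2)/Δ)) / ((2*(a+2)+e2)/Δ + (2*(a+2)-e2)/Δ)
        = (b-(a+2))/Δ := by
      rw [div_eq_div_iff (by positivity) hΔ.ne']
      field_simp
      linear_combination hΔ2
    rw [e3, e4]
    have e5 : (b-(a+2))/Δ = -(((a+2)-b)/Δ) := by ring
    rw [e5, arctan_neg]
    ring
  simp only [hF]
  have L1 : b*(1:ℝ)^2+e2*1+(a+2) = (a+2)*(1:ℝ)^2+e2*1+b := by ring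
  have L2 : b*(-1:ℝ)^2+e2*(-1)+(a+2) = (a+2)*(-1:ℝ)^2+e2*(-1)+b := by ring
  rw [L1, L2, sub_self, sub_self]
  have A1 : (2*b*(-1:ℝ)+e2)/Δ = -((2*b-e2)/Δ) := by ring
  have A2 : (2*(a+2)*(-1:ℝ)+e2)/Δ = -((2*(a+2)-e2)/Δ) := by ring
  have B1 : (2*b*(1:ℝ)+e2)/Δ = (2*b+e2)/Δ := by ring
  have B2 : (2*(a+2)*(1:ℝ)+e2)/Δ = (2*(a+2)+e2)/Δ := by ring
  rw [A1, A2, B1, B2, arctan_neg, arctan_neg]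
  linear_combination (2*e2/((a+2)*Δ)) * key
end

section
/- Let a ∈ (−2,−1) and η > 0. Then the function u ↦ ((1 + ηu²)^{−2−1/a} − 1)·u^{2/a} is Lebesgue integrable on (0,+∞) and ∫₀^{+∞} ((1 + ηu²)^{−2−1/a} − 1)·u^{2/a} du = (√π/4)·(Γ((a+2)/(2a))/Γ((2a+1)/a))·η^{−(a+2)/(2a)}, where Γ denotes the Euler Gamma function. -/
open MeasureTheory Real Set


lemma realBeta {q r : ℝ} (hq : 0 < q) (hr : 0 < r) :
    ∫ x in Ioo (0:ℝ) 1, x ^ (q-1) * (1-x) ^ (r-1) =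
      Real.Gamma q * Real.Gamma r / Real.Gamma (q+r) := by
  set I : ℝ := ∫ x in Ioo (0:ℝ) 1, x ^ (q-1) * (1-x) ^ (r-1) with hI
  have hbeta : Complex.betaIntegral q r = (I : ℂ) := by
    rw [Complex.betaIntegral, intervalIntegral.integral_of_le zero_le_one,
      MeasureTheory.integral_Ioc_eq_integral_Ioo, hI]
    have hor : ((∫ x in Ioo (0:ℝ) 1, x ^ (q-1) * (1-x) ^ (r-1) : ℝ) : ℂ)
        = ∫ x in Ioo (0:ℝ) 1, ((x ^ (q-1) * (1-x) ^ (r-1) : ℝ) : ℂ) :=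
      (integral_ofReal (𝕜 := ℂ)).symm
    rw [hor]
    refine setIntegral_congr_fun measurableSet_Ioo (fun x hx => ?_)
    have h1 : (0:ℝ) ≤ x := hx.1.le
    have h2 : (0:ℝ) ≤ 1 - x := by linarith [hx.2]
    simp only [Complex.ofReal_mul]
    rw [Complex.ofReal_cpow h1, Complex.ofReal_cpow h2]
    push_cast
    ring
  have hmul := Complex.Gamma_mul_Gamma_eq_betaIntegral
    (s := (q:ℂ)) (t := (r:ℂ)) (by simpa using hq) (by simpa using hr)
  rw [hbeta, ← Complex.ofReal_add, Complex.Gamma_ofReal, Complex.Gamma_ofReal,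
    Complex.Gamma_ofReal, ← Complex.ofReal_mul, ← Complex.ofReal_mul] at hmul
  have := Complex.ofReal_injective hmul
  have hne : Real.Gamma (q+r) ≠ 0 := (Real.Gamma_pos_of_pos (by linarith)).ne'
  field_simp
  linarith [this]


section
variable {a η : ℝ}

lemma subst_key (ha1 : -2 < a) (ha2 : a < -1) (hη : 0 < η) :
    IntegrableOn (fun u : ℝ => u ^ (2/a + 2) * (1 + η * u^2) ^ (-3 - 1/a)) (Ioi 0) ∧
    ∫ u in Ioi (0:ℝ), u ^ (2/a + 2) * (1 + η * u^2) ^ (-3 - 1/a)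
      = ∫ x in Ioo (0:ℝ) 1,
          (1/2) * η ^ (-(2/a + 3)/2) * (x ^ (1/2 + 1/a) * (1-x) ^ ((1:ℝ)/2)) := by
  have ha0 : a < 0 := by linarith
  have hane : a ≠ 0 := ha0.ne
  set h : ℝ → ℝ := fun x => x / (η * (1 - x)) with hh_def
  set φ : ℝ → ℝ := fun x => h x ^ ((1:ℝ)/2) with hφ_def
  set φ' : ℝ → ℝ := fun x => (η / (η * (1 - x))^2) * ((1:ℝ)/2) * h x ^ ((1:ℝ)/2 - 1) with hφ'_def
  set G : ℝ → ℝ := fun u => u ^ (2/a + 2) * (1 + η * u^2) ^ (-3 - 1/a) with hG_def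
  -- basic facts on Ioo
  have hyp : ∀ x ∈ Ioo (0:ℝ) 1, 0 < 1 - x := fun x hx => by linarith [hx.2]
  have hhp : ∀ x ∈ Ioo (0:ℝ) 1, 0 < h x := fun x hx =>
    div_pos hx.1 (mul_pos hη (hyp x hx))
  -- derivative
  have hderiv : ∀ x ∈ Ioo (0:ℝ) 1, HasDerivAt φ (φ' x) x := by
    intro x hx
    have hy := hyp x hx
    have hd : HasDerivAt h (η / (η * (1 - x))^2) x := by
      have h1 : HasDerivAt (fun x : ℝ => x) 1 x := hasDerivAt_id x
      have h2 : HasDerivAt (fun x : ℝ => η * (1 - x)) (-η) x := by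
        simpa using ((hasDerivAt_id x).const_sub 1).const_mul η
      have := h1.div h2 (by positivity)
      refine this.congr_deriv ?_
      ring
    exact hd.rpow_const (p := (1:ℝ)/2) (Or.inl (hhp x hx).ne')
  have hderivW : ∀ x ∈ Ioo (0:ℝ) 1, HasDerivWithinAt φ (φ' x) (Ioo (0:ℝ) 1) x :=
    fun x hx => (hderiv x hx).hasDerivWithinAt
  -- injectivity
  have hmono : StrictMonoOn φ (Ioo (0:ℝ) 1) := by
    intro x hx y hy hxy
    have : h x < h y := by
      rw [hh_def]
      rw [div_lt_div_iff₀ (mul_pos hη (hyp x hx)) (mul_pos hη (hyp y hy))]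
      nlinarith [hx.1, hy.2]
    exact Real.rpow_lt_rpow (hhp x hx).le this (by norm_num)
  have hinj : InjOn φ (Ioo (0:ℝ) 1) := hmono.injOn
  -- image
  have himg : φ '' Ioo (0:ℝ) 1 = Ioi (0:ℝ) := by
    ext u
    constructor
    · rintro ⟨x, hx, rfl⟩
      exact Real.rpow_pos_of_pos (hhp x hx) _
    · intro hu
      have hu' : (0:ℝ) < u := hu
      have hden : (0:ℝ) < 1 + η * u^2 := by positivity
      refine ⟨η * u^2 / (1 + η * u^2), ⟨by positivity, ?_⟩, ?_⟩
      · rw [div_lt_one hden]; linarith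
      · have hx1 : 1 - η * u^2 / (1 + η * u^2) = 1 / (1 + η * u^2) := by
          field_simp
          ring
        have : h (η * u^2 / (1 + η * u^2)) = u^2 := by
          rw [hh_def]
          simp only
          rw [hx1]
          field_simp
        rw [hφ_def]
        simp only
        rw [this, ← Real.rpow_natCast u 2, ← Real.rpow_mul hu'.le]
        norm_num
  -- change of variables
  have hiff := integrableOn_image_iff_integrableOn_abs_deriv_smul
    measurableSet_Ioo hderivW hinj G
  have hval := integral_image_eq_integral_abs_deriv_smul
    measurableSet_Ioo hderivW hinj G
  rw [himg] at hiff hval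
  -- integrand identity on Ioo
  have hkey : ∀ x ∈ Ioo (0:ℝ) 1, |φ' x| • G (φ x)
      = (1/2) * η ^ (-(2/a + 3)/2) * (x ^ (1/2 + 1/a) * (1-x) ^ ((1:ℝ)/2)) := by
    intro x hx
    have hy := hyp x hx
    have hxp := hx.1
    have hh0 := hhp x hx
    have hηy : 0 < η * (1 - x) := mul_pos hη hy
    have hφ'pos : 0 < φ' x := by
      rw [hφ'_def]
      have : (0:ℝ) < η / (η * (1-x))^2 := by positivity
      positivity
    rw [smul_eq_mul, abs_of_pos hφ'pos]
    -- compute G (φ x)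
    have h2 : φ x ^ (2:ℕ) = h x := by
      rw [hφ_def]
      simp only
      rw [← Real.rpow_natCast (h x ^ ((1:ℝ)/2)) 2, ← Real.rpow_mul hh0.le]
      norm_num
    have h3 : 1 + η * h x = (1 - x)⁻¹ := by
      rw [hh_def]
      simp only
      field_simp
      ring
    have h1 : φ x ^ (2/a + 2) = h x ^ ((1/2) * (2/a + 2)) := by
      rw [hφ_def]
      simp only
      rw [← Real.rpow_mul hh0.le]
    have h4 : ((1-x)⁻¹) ^ (-3 - 1/a) = (1-x) ^ (3 + 1/a) := by
      rw [← Real.rpow_neg_one (1-x), ← Real.rpow_mul hy.le]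
      ring_nf
    have hG : G (φ x) = h x ^ ((1/2) * (2/a + 2)) * (1-x) ^ (3 + 1/a) := by
      rw [hG_def]
      simp only
      rw [h2, h1, h3, h4]
    rw [hG, hφ'_def]
    simp only
    -- now pure rpow algebra
    have h5 : h x ^ ((1:ℝ)/2 - 1) * h x ^ ((1/2) * (2/a + 2)) = h x ^ (1/2 + 1/a) := by
      rw [← Real.rpow_add hh0]
      congr 1
      ring
    have h6 : h x ^ ((1:ℝ)/2 + 1/a)
        = x ^ ((1:ℝ)/2 + 1/a) * (η * (1-x)) ^ (-((1:ℝ)/2 + 1/a)) := by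
      rw [hh_def]
      simp only
      rw [Real.div_rpow hxp.le hηy.le, Real.rpow_neg hηy.le, div_eq_mul_inv]
    have h7 : (η * (1-x)) ^ (-((1:ℝ)/2 + 1/a))
        = η ^ (-((1:ℝ)/2 + 1/a)) * (1-x) ^ (-((1:ℝ)/2 + 1/a)) :=
      Real.mul_rpow hη.le hy.le
    have h8 : (η * (1-x))^(2:ℕ) = η ^ ((2:ℝ)) * (1-x) ^ ((2:ℝ)) := by
      rw [mul_pow, ← Real.rpow_natCast η 2, ← Real.rpow_natCast (1-x) 2]
      norm_num
    calc η / (η * (1 - x)) ^ 2 * (1 / 2) * h x ^ ((1:ℝ)/2 - 1)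
          * (h x ^ (1 / 2 * (2 / a + 2)) * (1 - x) ^ (3 + 1 / a))
        = η / (η * (1 - x)) ^ 2 * (1 / 2) * (h x ^ ((1:ℝ)/2 - 1)
          * h x ^ (1 / 2 * (2 / a + 2))) * (1 - x) ^ (3 + 1 / a) := by ring
      _ = η / (η * (1 - x)) ^ 2 * (1 / 2) * (x ^ ((1:ℝ)/2 + 1/a)
          * (η ^ (-((1:ℝ)/2 + 1/a)) * (1-x) ^ (-((1:ℝ)/2 + 1/a)))) * (1 - x) ^ (3 + 1 / a) := by
          rw [h5, h6, h7]
      _ = (1/2) * (η ^ ((1:ℝ)) * (η ^ ((2:ℝ)))⁻¹ * η ^ (-((1:ℝ)/2 + 1/a)))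
          * (((1-x) ^ ((2:ℝ)))⁻¹ * (1-x) ^ (-((1:ℝ)/2 + 1/a)) * (1 - x) ^ (3 + 1 / a))
          * x ^ ((1:ℝ)/2 + 1/a) := by
          rw [h8, Real.rpow_one]
          field_simp
      _ = (1/2) * η ^ (-(2/a + 3)/2) * (x ^ (1/2 + 1/a) * (1-x) ^ ((1:ℝ)/2)) := by
          rw [← Real.rpow_neg hη.le, ← Real.rpow_neg hy.le,
            ← Real.rpow_add hη, ← Real.rpow_add hη, ← Real.rpow_add hy, ← Real.rpow_add hy]
          rw [show (1:ℝ) + -2 + -(1/2 + 1/a) = -(2/a+3)/2 by ring,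
            show (-2:ℝ) + -(1/2 + 1/a) + (3 + 1/a) = 1/2 by ring]
          ring
  -- integrability of the model integrand on (0,1)
  have he1 : (-1:ℝ) < 1/2 + 1/a := by
    have h1a : (-1:ℝ) < 1/a := by
      rw [lt_div_iff_of_neg ha0]
      linarith
    linarith
  have hibase : IntegrableOn (fun x : ℝ => x ^ ((1:ℝ)/2 + 1/a)) (Ioo 0 1) := by
    have := (intervalIntegral.intervalIntegrable_rpow' (a := (0:ℝ)) (b := 1)
      (r := 1/2 + 1/a) he1)
    rw [intervalIntegrable_iff_integrableOn_Ioo_of_le zero_le_one] at this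
    exact this
  have hmodel : IntegrableOn
      (fun x : ℝ => (1/2) * η ^ (-(2/a + 3)/2) * (x ^ (1/2 + 1/a) * (1-x) ^ ((1:ℝ)/2)))
      (Ioo 0 1) := by
    refine (Integrable.mono (hibase.const_mul ((1/2) * η ^ (-(2/a + 3)/2) )) ?_ ?_)
    · refine (ContinuousOn.mul continuousOn_const (ContinuousOn.mul ?_ ?_)).aestronglyMeasurable
        measurableSet_Ioo
      · exact fun x hx => (Real.continuousAt_rpow_const x _ (Or.inl hx.1.ne')).continuousWithinAt
      · exact fun x hx => (Real.continuousAt_rpow_const (1-x) _ (Or.inr (by norm_num))).comp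
          (by fun_prop) |>.continuousWithinAt
    · filter_upwards [ae_restrict_mem measurableSet_Ioo] with x hx
      have hy : 0 < 1 - x := by linarith [hx.2]
      have h1 : (1-x) ^ ((1:ℝ)/2) ≤ 1 :=
        Real.rpow_le_one hy.le (by linarith [hx.1]) (by norm_num)
      have hx0 : (0:ℝ) ≤ x ^ ((1:ℝ)/2 + 1/a) := (Real.rpow_pos_of_pos hx.1 _).le
      have hc : (0:ℝ) ≤ (1/2) * η ^ (-(2/a + 3)/2) := by positivity
      rw [Real.norm_eq_abs, Real.norm_eq_abs, abs_of_nonneg (by positivity),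
        abs_of_nonneg (by positivity)]
      calc 1/2 * η ^ (-(2/a + 3)/2) * (x ^ (1/2 + 1/a) * (1-x) ^ ((1:ℝ)/2))
          ≤ 1/2 * η ^ (-(2/a + 3)/2) * (x ^ (1/2 + 1/a) * 1) := by
            gcongr
        _ = 1/2 * η ^ (-(2/a + 3)/2) * x ^ (1/2 + 1/a) := by ring
  constructor
  · exact hiff.mpr (hmodel.congr_fun (fun x hx => (hkey x hx).symm) measurableSet_Ioo)
  · rw [hval]
    exact setIntegral_congr_fun measurableSet_Ioo hkey


lemma auxF_deriv {a η : ℝ} (hp1ne : 2/a + 1 ≠ 0) {u : ℝ} (hb : 0 < 1 + η * u ^ 2)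
    (hu0 : 0 < u) :
    HasDerivAt (fun u : ℝ => ((1 + η * u ^ 2) ^ (-2 - 1/a) - 1) * u ^ (2/a + 1) / (2/a + 1))
      (((1 + η * u ^ 2) ^ (-2 - 1/a) - 1) * u ^ (2/a)
        + (η * 2 * (-2 - 1/a) / (2/a + 1))
          * (u ^ (2/a + 2) * (1 + η * u ^ 2) ^ (-3 - 1/a))) u := by
  have d1 : HasDerivAt (fun u : ℝ => 1 + η * u ^ 2) (η * (2 * u)) u := by
    simpa using ((hasDerivAt_pow 2 u).const_mul η).const_add 1
  have d2 : HasDerivAt (fun u : ℝ => (1 + η * u ^ 2) ^ (-2 - 1/a))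
      (η * (2 * u) * (-2 - 1/a) * (1 + η * u ^ 2) ^ (-2 - 1/a - 1)) u :=
    d1.rpow_const (Or.inl hb.ne')
  have d3 := d2.sub_const 1
  have d4 : HasDerivAt (fun u : ℝ => u ^ (2/a + 1)) ((2/a + 1) * u ^ (2/a)) u := by
    have := Real.hasDerivAt_rpow_const (x := u) (p := 2/a + 1) (Or.inl hu0.ne')
    convert this using 2
    ring_nf
  have dF := (d3.mul d4).div_const (2/a + 1)
  refine dF.congr_deriv (Eq.symm ?_)
  have hru : u ^ (2/a + 2) = u * u ^ (2/a + 1) := by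
    nth_rewrite 2 [← Real.rpow_one u]
    rw [← Real.rpow_add hu0]
    ring_nf
  rw [show (-2 - 1/a - 1 : ℝ) = -3 - 1/a by ring, hru, eq_div_iff hp1ne]
  field_simp
  ring


set_option maxHeartbeats 2000000 in
/-- for `a ∈ (−2,−1)` and `η > 0`, the function
`u ↦ ((1 + ηu²)^{−2−1/a} − 1)·u^{2/a}` is Lebesgue integrable on `(0,+∞)` and
`∫₀^{+∞} ((1 + ηu²)^{−2−1/a} − 1)·u^{2/a} du
  = (√π/4)·(Γ((a+2)/(2a))/Γ((2a+1)/a))·η^{−(a+2)/(2a)}`. -/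
theorem stmt_12 (a η : ℝ) (ha1 : -2 < a) (ha2 : a < -1) (hη : 0 < η) :
    IntegrableOn (fun u : ℝ =>
      ((1 + η * u ^ 2) ^ (-2 - 1 / a) - 1) * u ^ (2 / a)) (Ioi 0) ∧
    ∫ u in Ioi (0 : ℝ), ((1 + η * u ^ 2) ^ (-2 - 1 / a) - 1) * u ^ (2 / a) =
      (Real.sqrt π / 4) * (Real.Gamma ((a + 2) / (2 * a)) / Real.Gamma ((2 * a + 1) / a)) *
        η ^ (-(a + 2) / (2 * a)) := by
  have ha0 : a < 0 := by linarith
  have hane : a ≠ 0 := ha0.ne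
  have h1a : (-1:ℝ) < 1/a := by rw [lt_div_iff_of_neg ha0]; linarith
  have h1a' : 1/a < -(1/2) := by rw [div_lt_iff_of_neg ha0]; linarith
  have h2a : (-2:ℝ) < 2/a := by rw [lt_div_iff_of_neg ha0]; linarith
  have h2a' : 2/a < -1 := by rw [div_lt_iff_of_neg ha0]; linarith
  set f : ℝ → ℝ := fun u => ((1 + η * u ^ 2) ^ (-2 - 1/a) - 1) * u ^ (2/a) with hf_def
  set G : ℝ → ℝ := fun u => u ^ (2/a + 2) * (1 + η * u^2) ^ (-3 - 1/a) with hG_def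
  -- positivity of base
  have hb : ∀ u : ℝ, 0 < 1 + η * u ^ 2 := fun u => by positivity
  have hb1 : ∀ u : ℝ, 1 ≤ 1 + η * u ^ 2 := fun u => by nlinarith [sq_nonneg u, hη.le]
  have hsneg : -2 - 1/a < 0 := by linarith
  have hle1 : ∀ u : ℝ, (1 + η * u ^ 2) ^ (-2 - 1/a) ≤ 1 := fun u =>
    Real.rpow_le_one_of_one_le_of_nonpos (hb1 u) hsneg.le
  have hge0 : ∀ u : ℝ, 0 < (1 + η * u ^ 2) ^ (-2 - 1/a) := fun u =>
    Real.rpow_pos_of_pos (hb u) _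
  -- pointwise quadratic bound near zero
  have hquad : ∀ u : ℝ, 1 - (1 + η * u ^ 2) ^ (-2 - 1/a)
      ≤ 2 * (η * u^2) + (η * u^2)^2 := by
    intro u
    have hXe : (1 + η * u ^ 2) ^ ((-2:ℝ)) ≤ (1 + η * u ^ 2) ^ (-2 - 1/a) :=
      Real.rpow_le_rpow_of_exponent_le (hb1 u) (by
        have : 1/a < 0 := by linarith
        linarith)
    have hXv : (1 + η * u ^ 2) ^ ((-2:ℝ)) = ((1 + η * u ^ 2) ^ (2:ℕ))⁻¹ := by
      rw [show ((-2:ℝ)) = -((2:ℕ):ℝ) by norm_num, Real.rpow_neg (hb u).le,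
        Real.rpow_natCast]
    have hpos : (0:ℝ) < (1 + η * u ^ 2) ^ (2:ℕ) := by positivity
    have hinv : ((1 + η * u ^ 2) ^ (2:ℕ))⁻¹ * (1 + η * u ^ 2) ^ (2:ℕ) = 1 :=
      inv_mul_cancel₀ hpos.ne'
    have h1 : 1 - ((1 + η * u ^ 2) ^ (2:ℕ))⁻¹ ≤ 2 * (η * u^2) + (η * u^2)^2 := by
      nlinarith [inv_pos.mpr hpos, sq_nonneg (η * u^2), hb1 u]
    calc 1 - (1 + η * u ^ 2) ^ (-2 - 1/a) ≤ 1 - (1 + η * u ^ 2) ^ ((-2:ℝ)) := by linarith [hXe]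
      _ = 1 - ((1 + η * u ^ 2) ^ (2:ℕ))⁻¹ := by rw [hXv]
      _ ≤ 2 * (η * u^2) + (η * u^2)^2 := h1
  -- continuity of f on Ioi 0
  have hcontf : ContinuousOn f (Ioi 0) := by
    intro u hu
    have c1 : ContinuousAt (fun u : ℝ => (1 + η * u ^ 2) ^ (-2 - 1/a)) u := by
      exact ContinuousAt.rpow_const (by fun_prop) (Or.inl (hb u).ne')
    have c2 : ContinuousAt (fun u : ℝ => u ^ (2/a)) u :=
      Real.continuousAt_rpow_const _ _ (Or.inl (ne_of_gt hu))
    exact (((c1.sub continuousAt_const).mul c2)).continuousWithinAt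
  -- norm formula
  have hnorm : ∀ u : ℝ, 0 < u → ‖f u‖ = (1 - (1 + η * u ^ 2) ^ (-2 - 1/a)) * u ^ (2/a) := by
    intro u hu
    rw [hf_def]
    simp only
    rw [Real.norm_eq_abs, abs_mul, abs_of_nonpos (by linarith [hle1 u]),
      abs_of_nonneg (Real.rpow_pos_of_pos hu _).le, neg_sub]
  -- integrability of f
  have hfint : IntegrableOn f (Ioi 0) := by
    have hsplit : Ioc (0:ℝ) 1 ∪ Ioi 1 = Ioi 0 := Ioc_union_Ioi_eq_Ioi zero_le_one
    rw [← hsplit]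
    apply IntegrableOn.union
    · -- on Ioc 0 1
      have base : IntegrableOn (fun u : ℝ => (2*η + η^2) * u ^ (2/a + 2)) (Ioc 0 1) := by
        have := (intervalIntegral.intervalIntegrable_rpow' (a := (0:ℝ)) (b := 1)
          (r := 2/a + 2) (by linarith))
        rw [intervalIntegrable_iff_integrableOn_Ioc_of_le zero_le_one] at this
        exact this.const_mul _
      refine Integrable.mono base
        ((hcontf.mono Ioc_subset_Ioi_self).aestronglyMeasurable measurableSet_Ioc) ?_
      filter_upwards [ae_restrict_mem measurableSet_Ioc] with u hu
      have hu0 := hu.1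
      have hu1 := hu.2
      rw [hnorm u hu0]
      have hu2 : u^2 ≤ 1 := by nlinarith
      have hu4 : u^2 * u^2 ≤ u^2 := by nlinarith
      have hrw : u ^ ((2:ℕ)) * u ^ (2/a) = u ^ (2/a + 2) := by
        rw [← Real.rpow_natCast u 2, ← Real.rpow_add hu0]
        norm_num
        ring_nf
      have hq := hquad u
      have hbd : 1 - (1 + η * u ^ 2) ^ (-2 - 1/a) ≤ (2*η + η^2) * u^2 := by
        nlinarith [hq, mul_nonneg (sq_nonneg η) (sub_nonneg.mpr hu4),
          mul_nonneg hη.le (sub_nonneg.mpr hu2)]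
      rw [Real.norm_eq_abs, abs_of_nonneg (by positivity)]
      calc (1 - (1 + η * u ^ 2) ^ (-2 - 1/a)) * u ^ (2/a)
          ≤ ((2*η + η^2) * u^2) * u ^ (2/a) := by
            have := Real.rpow_pos_of_pos hu0 (2/a)
            nlinarith [hbd, this.le, hge0 u, hle1 u]
        _ = (2*η + η^2) * u ^ (2/a + 2) := by rw [mul_assoc, hrw]
    · -- on Ioi 1
      have base : IntegrableOn (fun u : ℝ => u ^ (2/a)) (Ioi 1) :=
        integrableOn_Ioi_rpow_of_lt h2a' zero_lt_one
      refine Integrable.mono base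
        ((hcontf.mono (t := Ioi 1) (fun x hx => lt_trans zero_lt_one hx)).aestronglyMeasurable
          measurableSet_Ioi) ?_
      filter_upwards [ae_restrict_mem measurableSet_Ioi] with u hu
      have hu0 : (0:ℝ) < u := lt_trans zero_lt_one hu
      rw [hnorm u hu0, Real.norm_eq_abs, abs_of_nonneg (Real.rpow_pos_of_pos hu0 _).le]
      have := hge0 u
      nlinarith [Real.rpow_pos_of_pos hu0 (2/a), hle1 u]
  -- the antiderivative for integration by parts
  set c : ℝ := η * 2 * (-2 - 1/a) / (2/a + 1) with hc_def
  set F : ℝ → ℝ := fun u => ((1 + η * u ^ 2) ^ (-2 - 1/a) - 1) * u ^ (2/a + 1) / (2/a + 1)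
    with hF_def
  set F' : ℝ → ℝ := fun u => f u + c * G u with hF'_def
  have hp1 : 2/a + 1 < 0 := by linarith
  have hp1ne : 2/a + 1 ≠ 0 := hp1.ne
  have hderivF : ∀ u ∈ Ioi (0:ℝ), HasDerivAt F (F' u) u := fun u hu =>
    auxF_deriv hp1ne (hb u) hu
  -- F tends to 0 at +∞
  have htendF : Filter.Tendsto F Filter.atTop (nhds 0) := by
    have t0 : Filter.Tendsto (fun x : ℝ => x ^ (-(2 + 1/a))) Filter.atTop (nhds 0) :=
      tendsto_rpow_neg_atTop (by linarith)
    have tb : Filter.Tendsto (fun u : ℝ => 1 + η * u ^ 2) Filter.atTop Filter.atTop := by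
      apply Filter.tendsto_atTop_add_const_left
      exact (Filter.tendsto_pow_atTop (two_ne_zero)).const_mul_atTop hη
    have t1 : Filter.Tendsto (fun u : ℝ => (1 + η * u ^ 2) ^ (-2 - 1/a))
        Filter.atTop (nhds 0) := by
      have h := t0.comp tb
      have heq : (fun x : ℝ => x ^ (-(2 + 1/a))) ∘ (fun u : ℝ => 1 + η * u ^ 2)
          = fun u : ℝ => (1 + η * u ^ 2) ^ (-2 - 1/a) := by
        funext u
        rw [Function.comp_apply]
        congr 1
        ring
      rwa [heq] at h
    have t2 : Filter.Tendsto (fun u : ℝ => u ^ (2/a + 1)) Filter.atTop (nhds 0) := by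
      have := tendsto_rpow_neg_atTop (y := -(2/a + 1)) (by linarith)
      simpa using this
    have h := ((t1.sub_const 1).mul t2).div_const (2/a + 1)
    rw [hF_def]
    simpa using h
  -- F is continuous at 0 from the right
  have hF0 : F 0 = 0 := by
    rw [hF_def]
    norm_num
  have hcontF0 : ContinuousWithinAt F (Ici 0) 0 := by
    have hb3 : (0:ℝ) < 2/a + 3 := by linarith
    have hbound : ∀ u ∈ Ico (0:ℝ) 1,
        ‖F u‖ ≤ (2*η + η^2) / |2/a + 1| * u ^ (2/a + 3) := by
      intro u hu
      rcases eq_or_lt_of_le hu.1 with rfl | hu0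
      · rw [hF0]
        simp [Real.zero_rpow hb3.ne']
      · have hu1 : u < 1 := hu.2
        have hu2 : u^2 ≤ 1 := by nlinarith
        have hu4 : u^2 * u^2 ≤ u^2 := by nlinarith
        have hq := hquad u
        have hbd : 1 - (1 + η * u ^ 2) ^ (-2 - 1/a) ≤ (2*η + η^2) * u^2 := by
          nlinarith [hq, mul_nonneg (sq_nonneg η) (sub_nonneg.mpr hu4),
            mul_nonneg hη.le (sub_nonneg.mpr hu2)]
        have hup : 0 < u ^ (2/a + 1) := Real.rpow_pos_of_pos hu0 _
        have hru : u ^ (2:ℕ) * u ^ (2/a + 1) = u ^ (2/a + 3) := by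
          rw [← Real.rpow_natCast u 2, ← Real.rpow_add hu0]
          ring_nf
        rw [hF_def]
        simp only
        rw [norm_div, Real.norm_eq_abs, Real.norm_eq_abs, abs_mul,
          abs_of_nonpos (by linarith [hle1 u]), abs_of_nonneg hup.le, neg_sub,
          div_mul_eq_mul_div, div_le_div_iff₀ (abs_pos.mpr hp1ne) (abs_pos.mpr hp1ne)]
        apply mul_le_mul_of_nonneg_right _ (abs_nonneg _)
        calc (1 - (1 + η * u ^ 2) ^ (-2 - 1/a)) * u ^ (2/a + 1)
            ≤ ((2*η + η^2) * u^2) * u ^ (2/a + 1) := by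
              nlinarith [hbd, hup.le, hle1 u, hge0 u]
          _ = (2*η + η^2) * u ^ (2/a + 3) := by rw [mul_assoc, hru]
    have htb : Filter.Tendsto (fun u : ℝ => (2*η + η^2) / |2/a + 1| * u ^ (2/a + 3))
        (nhdsWithin 0 (Ici 0)) (nhds 0) := by
      have hc : ContinuousAt (fun u : ℝ => u ^ (2/a + 3)) 0 :=
        Real.continuousAt_rpow_const 0 _ (Or.inr hb3.le)
      have := (hc.tendsto.const_mul ((2*η + η^2) / |2/a + 1|)).mono_left
        (nhdsWithin_le_nhds (s := Ici (0:ℝ)))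
      simpa [Real.zero_rpow hb3.ne'] using this
    rw [ContinuousWithinAt, hF0]
    apply squeeze_zero_norm' _ htb
    filter_upwards [Ico_mem_nhdsGE_of_mem (by simp [zero_lt_one] : (0:ℝ) ∈ Ico 0 1)]
      with u hu using hbound u hu
  -- integrability of F'
  have hGint := (subst_key ha1 ha2 hη).1
  have hF'int : IntegrableOn F' (Ioi 0) := by
    rw [hF'_def]
    exact hfint.add (hGint.const_mul c)
  -- FTC
  have hFTC : ∫ u in Ioi (0:ℝ), F' u = 0 - F 0 :=
    integral_Ioi_of_hasDerivAt_of_tendsto hcontF0 hderivF hF'int htendF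
  rw [hF0, sub_zero] at hFTC
  have hadd : ∫ u in Ioi (0:ℝ), F' u
      = (∫ u in Ioi (0:ℝ), f u) + c * ∫ u in Ioi (0:ℝ), G u := by
    rw [hF'_def]
    rw [integral_add hfint (hGint.const_mul c), integral_const_mul]
  have hfval : ∫ u in Ioi (0:ℝ), f u = -c * ∫ u in Ioi (0:ℝ), G u := by
    rw [hadd] at hFTC
    linarith [hFTC]
  refine ⟨hfint, ?_⟩
  have hGval : ∫ u in Ioi (0:ℝ), G u
      = ∫ x in Ioo (0:ℝ) 1,
          (1/2) * η ^ (-(2/a + 3)/2) * (x ^ (1/2 + 1/a) * (1-x) ^ ((1:ℝ)/2)) :=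
    (subst_key ha1 ha2 hη).2
  have hq0 : (0:ℝ) < 3/2 + 1/a := by linarith
  have hB := realBeta (q := 3/2 + 1/a) (r := 3/2) hq0 (by norm_num)
  simp only [show (3/2 + 1/a) - (1:ℝ) = 1/2 + 1/a by ring,
    show ((3:ℝ)/2) - 1 = 1/2 by norm_num,
    show (3/2 + 1/a) + (3:ℝ)/2 = 3 + 1/a by ring] at hB
  have hpull : ∫ x in Ioo (0:ℝ) 1,
      (1/2) * η ^ (-(2/a + 3)/2) * (x ^ (1/2 + 1/a) * (1-x) ^ ((1:ℝ)/2))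
      = (1/2) * η ^ (-(2/a + 3)/2) *
        ∫ x in Ioo (0:ℝ) 1, x ^ (1/2 + 1/a) * (1-x) ^ ((1:ℝ)/2) := integral_const_mul _ _
  have hΓ1 : Real.Gamma (3/2 + 1/a) = (1/2 + 1/a) * Real.Gamma (1/2 + 1/a) := by
    rw [show (3:ℝ)/2 + 1/a = (1/2 + 1/a) + 1 by ring, Real.Gamma_add_one (by
      intro hcon
      have : (1:ℝ)/a = -(1/2) := by linarith
      rw [this] at h1a'
      norm_num at h1a')]
  have h2ane : (2:ℝ) + 1/a ≠ 0 := by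
    have : (0:ℝ) < 2 + 1/a := by linarith
    exact this.ne'
  have hΓ2 : Real.Gamma (3 + 1/a) = (2 + 1/a) * Real.Gamma (2 + 1/a) := by
    rw [show (3:ℝ) + 1/a = (2 + 1/a) + 1 by ring, Real.Gamma_add_one h2ane]
  have hΓ32 : Real.Gamma (3/2) = Real.sqrt π / 2 := by
    rw [show (3:ℝ)/2 = 1/2 + 1 by norm_num, Real.Gamma_add_one (by norm_num),
      Real.Gamma_one_half_eq]
    ring
  have hΓ2pos : 0 < Real.Gamma (2 + 1/a) := Real.Gamma_pos_of_pos (by linarith)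
  have harg1 : (a + 2) / (2*a) = 1/2 + 1/a := by field_simp
  have harg2 : (2*a + 1) / a = 2 + 1/a := by field_simp
  have hηexp : -(a + 2) / (2*a) = -(2/a + 3)/2 + 1 := by field_simp; ring
  rw [hfval, hGval, hpull, hB, hΓ1, hΓ2, hΓ32, harg1, harg2, hηexp, hc_def]
  rw [Real.rpow_add hη, Real.rpow_one]
  have hΓ2ne : Real.Gamma (2 + 1/a) ≠ 0 := hΓ2pos.ne'
  generalize hg1 : Real.Gamma (1/2 + 1/a) = A
  generalize hg2 : Real.Gamma (2 + 1/a) = B at hΓ2ne hΓ2pos ⊢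
  generalize hg3 : η ^ (-(2/a + 3)/2) = X
  have h1 : 0 < a * (2*a + 1) := by nlinarith
  have h3 : (0:ℝ) < a + 2 := by linarith
  have hSpos : 0 < a * B * 16 + a^2 * B * 40 + a^3 * B * 16 := by
    nlinarith [mul_pos (mul_pos h1 h3) hΓ2pos]
  field_simp [hSpos.ne']
  have h4 : (2*a+1 : ℝ) ≠ 0 := by
    have : (2*a+1 : ℝ) < 0 := by linarith
    exact this.ne
  have hdne : ((2+a) * (2*(2*a*2*((2*a+1)*B)))) ≠ 0 := by
    refine mul_ne_zero (by linarith : (0:ℝ) < 2+a).ne' (mul_ne_zero two_ne_zero ?_)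
    exact mul_ne_zero (mul_ne_zero (mul_ne_zero two_ne_zero hane) two_ne_zero)
      (mul_ne_zero h4 hΓ2ne)
  rw [neg_eq_iff_eq_neg, div_eq_iff (mul_ne_zero (by linarith : (0:ℝ) < 2+a).ne' h4)]
  ring
end
end

section
/- Let a ∈ (−1,0) and η > 0. Then the function u ↦ ((1 + ηu²)^{−(2a+3)/(a+2)} − 1)·u^{−2/(a+2)} is Lebesgue integrable on (0,+∞) and ∫₀^{+∞} ((1 + ηu²)^{−(2a+3)/(a+2)} − 1)·u^{−2/(a+2)} du = (√π/4)·(Γ(a/(2(a+2)))/Γ((2a+3)/(a+2)))·η^{−a/(2(a+2))}, where Γ denotes the Euler Gamma function. -/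
open MeasureTheory Real Set
open Filter

section Aux

lemma real_beta (b c : ℝ) (hb : 0 < b) (hc : 0 < c) :
    Real.Gamma b * Real.Gamma c =
      Real.Gamma (b + c) * ∫ t in (0:ℝ)..1, t ^ (b - 1) * (1 - t) ^ (c - 1) := by
  have key := Complex.Gamma_mul_Gamma_eq_betaIntegral (s := (b:ℂ)) (t := (c:ℂ))
    (by simpa using hb) (by simpa using hc)
  have hBeta : Complex.betaIntegral (b:ℂ) (c:ℂ) =
      ((∫ t in (0:ℝ)..1, t ^ (b - 1) * (1 - t) ^ (c - 1) : ℝ) : ℂ) := by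
    rw [Complex.betaIntegral, ← intervalIntegral.integral_ofReal]
    refine intervalIntegral.integral_congr fun x hx => ?_
    rw [uIcc_of_le (by norm_num)] at hx
    obtain ⟨hx0, hx1⟩ := hx
    rw [Complex.ofReal_mul, Complex.ofReal_cpow hx0, Complex.ofReal_cpow (by linarith : (0:ℝ) ≤ 1 - x)]
    push_cast
    ring_nf
  rw [hBeta] at key
  have : ((Real.Gamma b * Real.Gamma c : ℝ) : ℂ) =
      ((Real.Gamma (b + c) * ∫ t in (0:ℝ)..1, t ^ (b - 1) * (1 - t) ^ (c - 1) : ℝ) : ℂ) := by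
    rw [Complex.ofReal_mul, Complex.ofReal_mul, ← Complex.Gamma_ofReal, ← Complex.Gamma_ofReal,
      ← Complex.Gamma_ofReal, Complex.ofReal_add]
    exact key
  exact_mod_cast this

lemma image_Ioo : (fun t : ℝ => t / (1 - t)) '' Ioo 0 1 = Ioi 0 := by
  ext y
  constructor
  · rintro ⟨t, ⟨ht0, ht1⟩, rfl⟩
    exact div_pos ht0 (by linarith)
  · intro hy
    rw [mem_Ioi] at hy
    refine ⟨y / (1 + y), ⟨div_pos hy (by linarith), (div_lt_one (by linarith)).2 (by linarith)⟩, ?_⟩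
    have h1 : (1:ℝ) + y ≠ 0 := by positivity
    field_simp
    ring

lemma beta_Ioi (b c : ℝ) (hb : 0 < b) (hc : 0 < c) :
    ∫ x in Ioi (0:ℝ), x ^ (b - 1) * (1 + x) ^ (-(b + c)) =
      Real.Gamma b * Real.Gamma c / Real.Gamma (b + c) := by
  have hderiv : ∀ t ∈ Ioo (0:ℝ) 1, HasDerivWithinAt (fun t : ℝ => t / (1 - t))
      (((1 - t) ^ 2)⁻¹) (Ioo 0 1) t := by
    intro t ⟨ht0, ht1⟩
    have h1 : (1:ℝ) - t ≠ 0 := by linarith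
    have := (hasDerivAt_id t).div ((hasDerivAt_id t).const_sub 1) h1
    refine this.hasDerivWithinAt.congr_deriv ?_
    simp only [id]
    ring
  have hinj : InjOn (fun t : ℝ => t / (1 - t)) (Ioo 0 1) := by
    rintro t1 ⟨h10, h11⟩ t2 ⟨h20, h21⟩ h
    have e1 : (1:ℝ) - t1 ≠ 0 := by linarith
    have e2 : (1:ℝ) - t2 ≠ 0 := by linarith
    field_simp at h
    linarith
  have key := integral_image_eq_integral_abs_deriv_smul (f := fun t : ℝ => t / (1 - t))
    (f' := fun t : ℝ => ((1 - t) ^ 2)⁻¹) measurableSet_Ioo hderiv hinj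
    (fun x => x ^ (b - 1) * (1 + x) ^ (-(b + c)))
  rw [image_Ioo] at key
  rw [key]
  have congr1 : ∫ t in Ioo (0:ℝ) 1, |((1 - t) ^ 2)⁻¹| •
      ((t / (1 - t)) ^ (b - 1) * (1 + t / (1 - t)) ^ (-(b + c))) =
      ∫ t in Ioo (0:ℝ) 1, t ^ (b - 1) * (1 - t) ^ (c - 1) := by
    refine setIntegral_congr_fun measurableSet_Ioo fun t ⟨ht0, ht1⟩ => ?_
    have hu : (0:ℝ) < 1 - t := by linarith
    have hadd : 1 + t / (1 - t) = (1 - t)⁻¹ := by field_simp; ring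
    rw [hadd, smul_eq_mul, abs_of_pos (by positivity),
      Real.div_rpow ht0.le hu.le, ← Real.rpow_neg_one (1 - t), ← Real.rpow_natCast (1-t) 2,
      ← Real.rpow_mul hu.le, ← Real.rpow_neg hu.le]
    push_cast
    have step : (1-t) ^ (-2:ℝ) * (t ^ (b - 1) / (1 - t) ^ (b - 1) * (1 - t) ^ (-1 * -(b + c))) =
        t ^ (b-1) * ((1-t) ^ (-2:ℝ) * ((1-t) ^ (-(b-1)) * (1-t) ^ (-1 * -(b+c)))) := by
      rw [div_eq_mul_inv, ← Real.rpow_neg hu.le]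
      ring
    rw [step, ← Real.rpow_add hu, ← Real.rpow_add hu]
    congr 1
    ring_nf
  rw [congr1, ← MeasureTheory.integral_Ioc_eq_integral_Ioo,
    ← intervalIntegral.integral_of_le (by norm_num : (0:ℝ) ≤ 1)]
  have hG : Real.Gamma (b + c) ≠ 0 := (Real.Gamma_pos_of_pos (by linarith)).ne'
  field_simp
  linarith [real_beta b c hb hc]
lemma integrableOn_kern (q r η : ℝ) (hq : -1 < q) (hqr : q - 2*r < -1) (hη : 0 < η) :
    IntegrableOn (fun x : ℝ => x ^ q * (1 + η * x^2) ^ (-r)) (Ioi 0) := by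
  have hr : 0 < r := by linarith
  have hcont : ContinuousOn (fun x : ℝ => x ^ q * (1 + η * x^2) ^ (-r)) (Ioi 0) := by
    intro x hx
    rw [mem_Ioi] at hx
    have h1 : ContinuousAt (fun x : ℝ => x ^ q) x :=
      continuousAt_id.rpow_const (Or.inl hx.ne')
    have h2 : ContinuousAt (fun x : ℝ => (1 + η * x^2) ^ (-r)) x :=
      ContinuousAt.rpow_const (by fun_prop) (Or.inl (by positivity))
    exact (h1.mul h2).continuousWithinAt
  rw [← Ioc_union_Ioi_eq_Ioi (by norm_num : (0:ℝ) ≤ 1)]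
  apply IntegrableOn.union
  · apply Integrable.mono' (g := fun x : ℝ => x ^ q)
    · exact (intervalIntegral.intervalIntegrable_rpow' hq (a := 0) (b := 1)).1
    · exact (hcont.mono Ioc_subset_Ioi_self).aestronglyMeasurable measurableSet_Ioc
    · filter_upwards [ae_restrict_mem measurableSet_Ioc] with x hx
      obtain ⟨hx0, _⟩ := hx
      have h1 : (0:ℝ) ≤ x ^ q := Real.rpow_nonneg hx0.le q
      have h2 : (1 + η * x^2) ^ (-r) ≤ 1 :=
        Real.rpow_le_one_of_one_le_of_nonpos (by nlinarith) (by linarith)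
      have h3 : (0:ℝ) ≤ (1 + η * x^2) ^ (-r) := Real.rpow_nonneg (by nlinarith) _
      rw [Real.norm_eq_abs, abs_of_nonneg (mul_nonneg h1 h3)]
      exact mul_le_of_le_one_right h1 h2
  · apply Integrable.mono' (g := fun x : ℝ => η ^ (-r) * x ^ (q - 2*r))
    · exact (integrableOn_Ioi_rpow_of_lt hqr one_pos).const_mul _
    · exact (hcont.mono (Ioi_subset_Ioi (by norm_num))).aestronglyMeasurable measurableSet_Ioi
    · filter_upwards [ae_restrict_mem measurableSet_Ioi] with x hx
      rw [mem_Ioi] at hx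
      have hx0 : (0:ℝ) < x := by linarith
      have h1 : (0:ℝ) ≤ x ^ q := Real.rpow_nonneg hx0.le q
      have h3 : (0:ℝ) ≤ (1 + η * x^2) ^ (-r) := Real.rpow_nonneg (by nlinarith) _
      rw [Real.norm_eq_abs, abs_of_nonneg (mul_nonneg h1 h3)]
      have h2 : (1 + η * x^2) ^ (-r) ≤ (η * x^2) ^ (-r) :=
        Real.rpow_le_rpow_of_nonpos (by positivity) (by linarith) (by linarith)
      calc x ^ q * (1 + η * x^2) ^ (-r) ≤ x ^ q * (η * x^2) ^ (-r) :=
            mul_le_mul_of_nonneg_left h2 h1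
        _ = η ^ (-r) * x ^ (q - 2*r) := by
            rw [Real.mul_rpow hη.le (by positivity), ← Real.rpow_natCast x 2,
              ← Real.rpow_mul hx0.le,
              show ((2:ℕ):ℝ) * -r = -(2*r) from by push_cast; ring,
              mul_left_comm, ← Real.rpow_add hx0,
              show q + -(2*r) = q - 2*r from by ring]

lemma beta_eta (b c η : ℝ) (hb : 0 < b) (hc : 0 < c) (hη : 0 < η) :
    ∫ x in Ioi (0:ℝ), x ^ (2*b - 1) * (1 + η * x^2) ^ (-(b + c)) =
      η ^ (-b) * (Real.Gamma b * Real.Gamma c / (2 * Real.Gamma (b + c))) := by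
  -- step 1 : η = 1
  have step1 : ∫ x in Ioi (0:ℝ), x ^ (2*b - 1) * (1 + x^2) ^ (-(b + c)) =
      Real.Gamma b * Real.Gamma c / (2 * Real.Gamma (b + c)) := by
    have key := integral_comp_rpow_Ioi (fun y : ℝ => y ^ (b-1) * (1 + y) ^ (-(b + c)))
      (p := 2) two_ne_zero
    rw [beta_Ioi b c hb hc] at key
    have congr1 : ∫ x in Ioi (0:ℝ), (|(2:ℝ)| * x ^ ((2:ℝ) - 1)) •
        ((x ^ (2:ℝ)) ^ (b-1) * (1 + x ^ (2:ℝ)) ^ (-(b + c))) =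
        ∫ x in Ioi (0:ℝ), 2 * (x ^ (2*b - 1) * (1 + x^2) ^ (-(b + c))) := by
      refine setIntegral_congr_fun measurableSet_Ioi fun x hx => ?_
      rw [mem_Ioi] at hx
      have e1 : (x ^ (2:ℝ)) ^ (b-1) = x ^ (2*(b-1)) := by rw [← Real.rpow_mul hx.le]
      have e2 : x ^ (2:ℝ) = x ^ 2 := by rw [← Real.rpow_natCast x 2]; norm_num
      have e3 : x ^ ((2:ℝ)-1) = x := by
        rw [show (2:ℝ)-1 = 1 by norm_num, Real.rpow_one]
      rw [smul_eq_mul, e1, e2, e3, show |(2:ℝ)| = 2 by norm_num,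
        show 2*b-1 = 1 + 2*(b-1) by ring, Real.rpow_add hx, Real.rpow_one]
      ring
    rw [congr1, integral_const_mul] at key
    have hG : (0:ℝ) < Real.Gamma (b+c) := Real.Gamma_pos_of_pos (by linarith)
    rw [eq_div_iff hG.ne'] at key
    rw [eq_div_iff (by positivity)]
    linear_combination key
  -- step 2 : scaling
  have hsq : (0:ℝ) < Real.sqrt η := Real.sqrt_pos.2 hη
  have key := integral_comp_mul_left_Ioi
    (fun y : ℝ => y ^ (2*b - 1) * (1 + y^2) ^ (-(b + c))) 0 hsq
  rw [mul_zero, step1, smul_eq_mul] at key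
  have congr2 : ∫ x in Ioi (0:ℝ), (Real.sqrt η * x) ^ (2*b-1) * (1 + (Real.sqrt η * x)^2) ^ (-(b+c)) =
      ∫ x in Ioi (0:ℝ), Real.sqrt η ^ (2*b-1) * (x ^ (2*b-1) * (1 + η * x^2) ^ (-(b+c))) := by
    refine setIntegral_congr_fun measurableSet_Ioi fun x hx => ?_
    rw [mem_Ioi] at hx
    rw [mul_pow, Real.sq_sqrt hη.le, Real.mul_rpow hsq.le hx.le]
    ring
  rw [congr2, integral_const_mul] at key
  have hsn : Real.sqrt η ^ (2*b-1) ≠ 0 := by positivity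
  have e : (Real.sqrt η) ^ (-(2*b-1)) * (Real.sqrt η)⁻¹ = η ^ (-b) := by
    rw [Real.sqrt_eq_rpow, ← Real.rpow_mul hη.le, ← Real.rpow_neg_one (η ^ (1/2:ℝ)),
      ← Real.rpow_mul hη.le, ← Real.rpow_add hη]
    congr 1
    ring
  have hI : ∫ x in Ioi (0:ℝ), x ^ (2*b - 1) * (1 + η * x^2) ^ (-(b + c)) =
      (Real.sqrt η ^ (2*b-1))⁻¹ * ((Real.sqrt η)⁻¹ *
        (Real.Gamma b * Real.Gamma c / (2 * Real.Gamma (b + c)))) := by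
    rw [← key, ← mul_assoc, inv_mul_cancel₀ hsn, one_mul]
  rw [hI, ← Real.rpow_neg hsq.le, ← mul_assoc, e]
lemma abs_term_le (s η x : ℝ) (hs : 1 < s) (hss : s < 2) (hη : 0 < η) (hx : 0 ≤ x) :
    |(1 + η * x^2) ^ (-s) - 1| ≤ 2 * η * x^2 := by
  set u : ℝ := η * x^2 with hu_def
  have hu : 0 ≤ u := by positivity
  have h1 : (1 + u) ^ (-s) ≤ 1 :=
    Real.rpow_le_one_of_one_le_of_nonpos (by linarith) (by linarith)
  have h2 : (1 + u) ^ (-2:ℝ) ≤ (1 + u) ^ (-s) :=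
    Real.rpow_le_rpow_of_exponent_le (by linarith) (by linarith)
  have hpos : (0:ℝ) < (1 + u)^2 := by positivity
  have h3 : 1 - (1 + u) ^ (-2:ℝ) ≤ 2 * u := by
    have e : (1 + u) ^ (-2:ℝ) = ((1 + u)^2)⁻¹ := by
      rw [show (-2:ℝ) = -((2:ℕ):ℝ) by norm_num, Real.rpow_neg (by linarith),
        Real.rpow_natCast]
    have h4 : 1 - 2*u ≤ 1/(1 + u)^2 := (le_div_iff₀ hpos).2 (by nlinarith [sq_nonneg u, mul_nonneg hu (sq_nonneg u), mul_nonneg (mul_nonneg hu hu) hu])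
    rw [e, ← one_div]
    linarith
  rw [abs_of_nonpos (by linarith)]
  have := h2.trans h1
  linarith

lemma integrableOn_main (p s η : ℝ) (hp1 : -2 < p) (hp2 : p < -1) (hs : 1 < s)
    (hss : s < 2) (hη : 0 < η) :
    IntegrableOn (fun x : ℝ => ((1 + η * x^2) ^ (-s) - 1) * x ^ p) (Ioi 0) := by
  have hcont : ContinuousOn (fun x : ℝ => ((1 + η * x^2) ^ (-s) - 1) * x ^ p) (Ioi 0) := by
    intro x hx
    rw [mem_Ioi] at hx
    have h1 : ContinuousAt (fun x : ℝ => x ^ p) x :=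
      continuousAt_id.rpow_const (Or.inl hx.ne')
    have h2 : ContinuousAt (fun x : ℝ => (1 + η * x^2) ^ (-s) - 1) x :=
      (ContinuousAt.rpow_const (by fun_prop) (Or.inl (by positivity))).sub continuousAt_const
    exact (h2.mul h1).continuousWithinAt
  rw [← Ioc_union_Ioi_eq_Ioi (by norm_num : (0:ℝ) ≤ 1)]
  apply IntegrableOn.union
  · apply Integrable.mono' (g := fun x : ℝ => 2 * η * x ^ (p + 2))
    · exact ((intervalIntegral.intervalIntegrable_rpow'
        (show (-1:ℝ) < p + 2 by linarith) (a := 0) (b := 1)).1).const_mul _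
    · exact (hcont.mono Ioc_subset_Ioi_self).aestronglyMeasurable measurableSet_Ioc
    · filter_upwards [ae_restrict_mem measurableSet_Ioc] with x hx
      obtain ⟨hx0, _⟩ := hx
      rw [Real.norm_eq_abs, abs_mul, abs_of_nonneg (Real.rpow_nonneg hx0.le p)]
      calc |(1 + η * x^2) ^ (-s) - 1| * x ^ p ≤ (2 * η * x^2) * x ^ p :=
            mul_le_mul_of_nonneg_right (abs_term_le s η x hs hss hη hx0.le)
              (Real.rpow_nonneg hx0.le p)
        _ = 2 * η * x ^ (p + 2) := by
            rw [show p + 2 = 2 + p by ring, Real.rpow_add hx0,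
              ← Real.rpow_natCast x 2]
            norm_num
            ring
  · apply Integrable.mono' (g := fun x : ℝ => x ^ p)
    · exact integrableOn_Ioi_rpow_of_lt hp2 one_pos
    · exact (hcont.mono (Ioi_subset_Ioi (by norm_num))).aestronglyMeasurable measurableSet_Ioi
    · filter_upwards [ae_restrict_mem measurableSet_Ioi] with x hx
      rw [mem_Ioi] at hx
      have hx0 : (0:ℝ) < x := by linarith
      rw [Real.norm_eq_abs, abs_mul, abs_of_nonneg (Real.rpow_nonneg hx0.le p)]
      have hb : (0:ℝ) < 1 + η * x^2 := by positivity
      have h1 : (1 + η * x^2) ^ (-s) ≤ 1 :=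
        Real.rpow_le_one_of_one_le_of_nonpos (by nlinarith) (by linarith)
      have h2 : (0:ℝ) < (1 + η * x^2) ^ (-s) := Real.rpow_pos_of_pos hb _
      have : |(1 + η * x^2) ^ (-s) - 1| ≤ 1 := by
        rw [abs_of_nonpos (by linarith)]; linarith
      nth_rewrite 2 [← one_mul (x ^ p)]
      exact mul_le_mul_of_nonneg_right this (Real.rpow_nonneg hx0.le p)

lemma main_aux (p s η : ℝ) (hp1 : -2 < p) (hp2 : p < -1) (hs : 1 < s)
    (hss : s < 2) (hη : 0 < η) :
    ∫ x in Ioi (0:ℝ), ((1 + η * x^2) ^ (-s) - 1) * x ^ p =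
      (2*s*η/(p+1)) * ∫ x in Ioi (0:ℝ), x ^ (p+2) * (1 + η * x^2) ^ (-(s+1)) := by
  set C : ℝ := 2*s*η/(p+1) with hC
  have hp1' : p + 1 ≠ 0 := by intro h; nlinarith
  have hint : IntegrableOn (fun x : ℝ => ((1 + η * x^2) ^ (-s) - 1) * x ^ p) (Ioi 0) :=
    integrableOn_main p s η hp1 hp2 hs hss hη
  have hk : IntegrableOn (fun x : ℝ => x ^ (p+2) * (1 + η * x^2) ^ (-(s+1))) (Ioi 0) :=
    integrableOn_kern (p+2) (s+1) η (by linarith) (by nlinarith) hη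
  set F : ℝ → ℝ := fun x => ((1 + η * x^2) ^ (-s) - 1) * x ^ (p+1) / (p+1) with hF
  have hF0 : F 0 = 0 := by
    simp [hF, Real.one_rpow]
  have hderiv : ∀ x ∈ Ioi (0:ℝ), HasDerivAt F
      (((1 + η * x^2) ^ (-s) - 1) * x ^ p -
        C * (x ^ (p+2) * (1 + η * x^2) ^ (-(s+1)))) x := by
    intro x hx
    rw [mem_Ioi] at hx
    have hb : (0:ℝ) < 1 + η * x^2 := by positivity
    have d1 : HasDerivAt (fun x : ℝ => 1 + η * x^2) (η * (2*x)) x := by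
      simpa using ((hasDerivAt_pow 2 x).const_mul η).const_add 1
    have d2 := (d1.rpow_const (p := -s) (Or.inl hb.ne')).sub_const 1
    have d3 : HasDerivAt (fun x : ℝ => x ^ (p+1)) ((p+1) * x ^ p) x := by
      have := Real.hasDerivAt_rpow_const (x := x) (p := p+1) (Or.inl hx.ne')
      convert this using 1
      congr 1
      ring
    have dF := (d2.mul d3).div_const (p+1)
    refine dF.congr_deriv ?_
    have e1 : x ^ (p+1) = x * x ^ p := by
      rw [show p + 1 = 1 + p by ring, Real.rpow_add hx, Real.rpow_one]
    have e2 : x ^ (p+2) = x^2 * x ^ p := by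
      rw [show p + 2 = 2 + p by ring, Real.rpow_add hx, ← Real.rpow_natCast x 2]
      norm_num
    have e3 : (1 + η * x^2) ^ (-(s+1)) = (1 + η * x^2) ^ (-s-1) := by
      congr 1
      ring
    rw [e1, e2, e3, hC]
    field_simp
    ring
  have hcont : ContinuousWithinAt F (Ici (0:ℝ)) 0 := by
    rw [ContinuousWithinAt, hF0]
    have hg : Tendsto (fun x : ℝ => (2*η/|p+1|) * x ^ (p+3)) (nhdsWithin 0 (Ici (0:ℝ)))
        (nhds 0) := by
      have h1 : ContinuousAt (fun x : ℝ => x ^ (p+3)) 0 :=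
        continuousAt_id.rpow_const (Or.inr (by linarith))
      have h2 := (h1.continuousWithinAt (s := Ici (0:ℝ))).tendsto
      rw [Real.zero_rpow (by intro h; nlinarith)] at h2
      simpa using h2.const_mul (2*η/|p+1|)
    apply squeeze_zero_norm' _ hg
    filter_upwards [eventually_mem_nhdsWithin] with x hx
    rw [mem_Ici] at hx
    rcases eq_or_lt_of_le hx with h | hx0
    · rw [← h]
      rw [hF0, Real.zero_rpow (by intro h'; nlinarith)]
      simp
    · have e1 : x ^ (p+3) = x^2 * x ^ (p+1) := by
        rw [show p + 3 = 2 + (p+1) by ring, Real.rpow_add hx0, ← Real.rpow_natCast x 2]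
        norm_num
      rw [Real.norm_eq_abs, hF, abs_div, abs_mul,
        abs_of_nonneg (Real.rpow_nonneg hx0.le (p+1)), e1]
      rw [div_le_iff₀ (by positivity : (0:ℝ) < |p+1|)]
      have := abs_term_le s η x hs hss hη hx0.le
      have hxp : (0:ℝ) ≤ x ^ (p+1) := Real.rpow_nonneg hx0.le _
      calc |(1 + η * x^2) ^ (-s) - 1| * x ^ (p+1) ≤ (2*η*x^2) * x ^ (p+1) :=
            mul_le_mul_of_nonneg_right this hxp
        _ = 2*η/|p+1| * (x^2 * x^(p+1)) * |p+1| := by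
            field_simp
  have htends : Tendsto F atTop (nhds 0) := by
    have h1 : Tendsto (fun x : ℝ => 1 + η * x^2) atTop atTop := by
      apply tendsto_atTop_add_const_left
      exact (tendsto_pow_atTop two_ne_zero).const_mul_atTop hη
    have h2 : Tendsto (fun x : ℝ => (1 + η * x^2) ^ (-s) - 1) atTop (nhds (0 - 1)) :=
      ((tendsto_rpow_neg_atTop (by linarith)).comp h1).sub_const 1
    have h3 : Tendsto (fun x : ℝ => x ^ (p+1)) atTop (nhds 0) := by
      have := tendsto_rpow_neg_atTop (y := -(p+1)) (by linarith)
      simpa using this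
    have := (h2.mul h3).div_const (p+1)
    simpa using this
  have hintF' : IntegrableOn (fun x : ℝ => ((1 + η * x^2) ^ (-s) - 1) * x ^ p -
      C * (x ^ (p+2) * (1 + η * x^2) ^ (-(s+1)))) (Ioi 0) :=
    hint.sub (hk.const_mul C)
  have FTC := integral_Ioi_of_hasDerivAt_of_tendsto hcont hderiv hintF' htends
  rw [hF0, sub_zero] at FTC
  rw [integral_sub hint (hk.const_mul C), integral_const_mul] at FTC
  linarith
end Aux


/-- for `a ∈ (−1,0)` and `η > 0`, the function
`u ↦ ((1 + ηu²)^{−(2a+3)/(a+2)} − 1)·u^{−2/(a+2)}` is Lebesgue integrable on `(0,+∞)` and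
`∫₀^{+∞} ((1 + ηu²)^{−(2a+3)/(a+2)} − 1)·u^{−2/(a+2)} du
  = (√π/4)·(Γ(a/(2(a+2)))/Γ((2a+3)/(a+2)))·η^{−a/(2(a+2))}`. -/
theorem stmt_14 (a η : ℝ) (ha1 : -1 < a) (ha2 : a < 0) (hη : 0 < η) :
    IntegrableOn (fun u : ℝ =>
      ((1 + η * u ^ 2) ^ (-(2 * a + 3) / (a + 2)) - 1) * u ^ (-2 / (a + 2))) (Ioi 0) ∧
    ∫ u in Ioi (0 : ℝ),
        ((1 + η * u ^ 2) ^ (-(2 * a + 3) / (a + 2)) - 1) * u ^ (-2 / (a + 2)) =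
      (Real.sqrt π / 4) *
        (Real.Gamma (a / (2 * (a + 2))) / Real.Gamma ((2 * a + 3) / (a + 2))) *
        η ^ (-a / (2 * (a + 2))) := by
  have ha2' : (0:ℝ) < a + 2 := by linarith
  set p : ℝ := -2 / (a + 2) with hp_def
  set s : ℝ := (2 * a + 3) / (a + 2) with hs_def
  have hps : -(2 * a + 3) / (a + 2) = -s := by rw [hs_def, neg_div]
  have hp1 : -2 < p := by
    rw [hp_def, lt_div_iff₀ ha2']
    nlinarith
  have hp2 : p < -1 := by
    rw [hp_def, div_lt_iff₀ ha2']
    nlinarith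
  have hs1 : 1 < s := by
    rw [hs_def, lt_div_iff₀ ha2']
    nlinarith
  have hs2 : s < 2 := by
    rw [hs_def, div_lt_iff₀ ha2']
    nlinarith
  rw [hps]
  refine ⟨integrableOn_main p s η hp1 hp2 hs1 hs2 hη, ?_⟩
  have key := main_aux p s η hp1 hp2 hs1 hs2 hη
  have hb0 : (0:ℝ) < (p+3)/2 := by linarith
  have ebeta := beta_eta ((p+3)/2) (3/2) η hb0 (by norm_num) hη
  rw [show 2*((p+3)/2)-1 = p+2 by ring,
    show (p+3)/2 + 3/2 = s+1 by rw [hp_def, hs_def]; field_simp; ring] at ebeta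
  rw [key, ebeta]
  -- Gamma identities
  have hb0' : a / (2 * (a + 2)) ≠ 0 := by
    apply div_ne_zero (by linarith) (by linarith)
  have eG1 : Real.Gamma ((p+3)/2) = (a / (2 * (a + 2))) * Real.Gamma (a / (2 * (a + 2))) := by
    rw [show (p+3)/2 = a / (2 * (a + 2)) + 1 by rw [hp_def]; field_simp; ring,
      Real.Gamma_add_one hb0']
  have eG2 : Real.Gamma ((3:ℝ)/2) = Real.sqrt π / 2 := by
    rw [show (3:ℝ)/2 = 1/2 + 1 by norm_num, Real.Gamma_add_one (by norm_num),
      Real.Gamma_one_half_eq]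
    ring
  have eG3 : Real.Gamma (s+1) = s * Real.Gamma s := Real.Gamma_add_one (by linarith)
  have eEta : η ^ (-((p+3)/2)) = η ^ (-a / (2 * (a + 2))) * η⁻¹ := by
    rw [show -((p+3)/2) = -a / (2 * (a + 2)) + (-1) by rw [hp_def]; field_simp; ring_nf,
      Real.rpow_add hη, Real.rpow_neg_one]
  rw [eG1, eG2, eG3, eEta]
  have hGs : Real.Gamma s ≠ 0 := (Real.Gamma_pos_of_pos (by linarith)).ne'
  have hp1' : p + 1 ≠ 0 := by intro h; nlinarith
  have hpval : p + 1 = a / (a + 2) := by rw [hp_def]; field_simp; ring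
  rw [hpval] at *
  have ha0 : a ≠ 0 := by linarith
  have ha2n : a + 2 ≠ 0 := by linarith
  field_simp
  ring
end

section
/- Let a ∈ (−2,−1) and η > 0. Then the identity (1/√η)·∫₀^{+∞} (1 + ηu²)^{−2−1/a}·arctan(√η·u)·u^{1+2/a} du + (1+2a)·∫₀^{+∞} (1 + ηu²)^{−3−1/a}·u^{2+2/a} du = η^{−(3a+2)/(2a)}·( aπ/(4(1+a)) − (a√π/(4(a+1)))·Γ((3a+2)/(2a))/Γ((2a+1)/a) + (1+2a)·(√π/4)·Γ((3a+2)/(2a))/Γ((3a+1)/a) ) holds, where Γ denotes the Euler Gamma function and both integrals are absolutely convergent. -/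
open MeasureTheory Real Set

set_option maxHeartbeats 1000000

lemma beta01 {u v : ℝ} (hu : 0 < u) (hv : 0 < v) :
    (∫ y in (0:ℝ)..1, y ^ (u - 1) * (1 - y) ^ (v - 1)) =
      Real.Gamma u * Real.Gamma v / Real.Gamma (u + v) := by
  have hC := Complex.Gamma_mul_Gamma_eq_betaIntegral
    (s := (u:ℂ)) (t := (v:ℂ)) (by simpa using hu) (by simpa using hv)
  have hB : Complex.betaIntegral (u:ℂ) (v:ℂ) =
      ((∫ y in (0:ℝ)..1, y ^ (u - 1) * (1 - y) ^ (v - 1) : ℝ) : ℂ) := by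
    rw [Complex.betaIntegral, ← intervalIntegral.integral_ofReal]
    apply intervalIntegral.integral_congr
    intro x hx
    rw [uIcc_of_le zero_le_one] at hx
    show (x:ℂ) ^ ((u:ℂ) - 1) * (1 - (x:ℂ)) ^ ((v:ℂ) - 1) = ((x ^ (u - 1) * (1 - x) ^ (v - 1) : ℝ) : ℂ)
    rw [Complex.ofReal_mul, Complex.ofReal_cpow hx.1, Complex.ofReal_cpow (by linarith [hx.2] : (0:ℝ) ≤ 1 - x)]
    push_cast
    ring
  rw [hB, ← Complex.ofReal_add, Complex.Gamma_ofReal, Complex.Gamma_ofReal,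
    Complex.Gamma_ofReal, ← Complex.ofReal_mul, ← Complex.ofReal_mul] at hC
  have h := Complex.ofReal_injective hC
  have hG : Real.Gamma (u + v) ≠ 0 := (Real.Gamma_pos_of_pos (by linarith)).ne'
  field_simp [h]
  rw [h]; ring

lemma beta01_integrable {u v : ℝ} (hu : 0 < u) (hv : 0 < v) :
    IntegrableOn (fun y : ℝ => y ^ (u - 1) * (1 - y) ^ (v - 1)) (Ioo 0 1) := by
  have h := (Complex.betaIntegral_convergent (u := (u:ℂ)) (v := (v:ℂ))
    (by simpa using hu) (by simpa using hv))
  have h2 : IntegrableOn (fun x : ℝ => (x:ℂ) ^ ((u:ℂ) - 1) * (1 - (x:ℂ)) ^ ((v:ℂ) - 1))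
      (Ioo 0 1) := h.1.mono_set Ioo_subset_Ioc_self
  refine (Integrable.mono' h2.norm ?_ ?_)
  · apply ContinuousOn.aestronglyMeasurable ?_ measurableSet_Ioo
    apply ContinuousOn.mul
    · exact fun y hy => (Real.continuousAt_rpow_const y _ (Or.inl hy.1.ne')).continuousWithinAt
    · exact ContinuousOn.rpow_const (by fun_prop) (fun y hy => Or.inl (by linarith [hy.2]))
  · filter_upwards [ae_restrict_mem measurableSet_Ioo] with y hy
    have h1 : (0:ℝ) < y := hy.1
    have h2' : (0:ℝ) < 1 - y := by linarith [hy.2]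
    have e1 : ‖(y:ℂ) ^ ((u:ℂ) - 1)‖ = y ^ (u - 1) := by
      rw [Complex.norm_cpow_eq_rpow_re_of_pos h1]; norm_num
    have e2 : ‖(1 - (y:ℂ)) ^ ((v:ℂ) - 1)‖ = (1 - y) ^ (v - 1) := by
      rw [show (1 - (y:ℂ)) = (((1 - y : ℝ)):ℂ) by push_cast; ring,
        Complex.norm_cpow_eq_rpow_re_of_pos h2']
      norm_num
    rw [norm_mul, norm_mul, e1, e2, Real.norm_eq_abs, Real.norm_eq_abs,
      abs_of_nonneg (Real.rpow_nonneg h1.le _), abs_of_nonneg (Real.rpow_nonneg h2'.le _)]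

lemma betaIoi {u v : ℝ} (hu : 0 < u) (hv : 0 < v)
    (hint : IntegrableOn (fun y : ℝ => y ^ (u - 1) * (1 - y) ^ (v - 1)) (Ioo 0 1))
    (hval : (∫ y in (0:ℝ)..1, y ^ (u - 1) * (1 - y) ^ (v - 1)) =
      Real.Gamma u * Real.Gamma v / Real.Gamma (u + v)) :
    IntegrableOn (fun x : ℝ => x ^ (u - 1) * (1 + x) ^ (-(u + v))) (Ioi 0) ∧
    (∫ x in Ioi (0:ℝ), x ^ (u - 1) * (1 + x) ^ (-(u + v))) =
      Real.Gamma u * Real.Gamma v / Real.Gamma (u + v) := by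
  set g : ℝ → ℝ := fun x => x ^ (u - 1) * (1 + x) ^ (-(u + v)) with hg
  have hderiv : ∀ y ∈ Ioo (0:ℝ) 1,
      HasDerivWithinAt (fun y : ℝ => y / (1 - y)) (((1 - y) ^ 2)⁻¹) (Ioo 0 1) y := by
    intro y hy
    have hne : 1 - y ≠ 0 := by have := hy.2; intro h; simp only [sub_eq_zero] at h; linarith
    have h := (hasDerivAt_id y).div ((hasDerivAt_const y 1).sub (hasDerivAt_id y)) hne
    refine h.hasDerivWithinAt.congr_deriv (Eq.symm ?_)
    simp only [Pi.sub_apply, id_eq]; ring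
  have hinj : InjOn (fun y : ℝ => y / (1 - y)) (Ioo 0 1) := by
    intro y1 h1 y2 h2 heq
    have d1 : 1 - y1 ≠ 0 := by have := h1.2; intro h; simp only [sub_eq_zero] at h; linarith
    have d2 : 1 - y2 ≠ 0 := by have := h2.2; intro h; simp only [sub_eq_zero] at h; linarith
    field_simp at heq
    nlinarith [heq]
  have himg : (fun y : ℝ => y / (1 - y)) '' (Ioo 0 1) = Ioi 0 := by
    ext x
    constructor
    · rintro ⟨y, hy, rfl⟩
      exact div_pos hy.1 (by linarith [hy.2])
    · intro hx
      have hx' : 0 < x := hx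
      have h1x : (0:ℝ) < 1 + x := by linarith
      refine ⟨x / (1 + x), ⟨div_pos hx' h1x, ?_⟩, ?_⟩
      · rw [div_lt_one h1x]; linarith
      · field_simp; ring
  have hpt : ∀ y ∈ Ioo (0:ℝ) 1,
      |((1 - y) ^ 2)⁻¹| • g (y / (1 - y)) = y ^ (u - 1) * (1 - y) ^ (v - 1) := by
    intro y hy
    have hz : (0:ℝ) < 1 - y := by linarith [hy.2]
    have e0 : 1 + y / (1 - y) = (1 - y)⁻¹ := by field_simp; ring
    have e1 : ((1 - y)⁻¹ : ℝ) ^ (-(u + v)) = (1 - y) ^ (u + v) := by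
      rw [← Real.rpow_neg_one (1 - y), ← Real.rpow_mul hz.le]
      norm_num
    have key : ((1 - y) ^ 2)⁻¹ * ((1 - y) ^ (-(u - 1)) * (1 - y) ^ (u + v)) =
        (1 - y) ^ (v - 1) := by
      rw [← Real.rpow_natCast (1 - y) 2, ← Real.rpow_neg hz.le, ← Real.rpow_add hz,
        ← Real.rpow_add hz]
      congr 1
      ring
    rw [smul_eq_mul, hg]
    simp only [e0, e1]
    rw [Real.div_rpow hy.1.le hz.le, div_eq_mul_inv, ← Real.rpow_neg hz.le,
      abs_of_nonneg (by positivity : (0:ℝ) ≤ ((1 - y) ^ 2)⁻¹)]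
    linear_combination y ^ (u - 1) * key
  have hint2 : IntegrableOn g (Ioi 0) := by
    rw [← himg,
      integrableOn_image_iff_integrableOn_abs_deriv_smul measurableSet_Ioo hderiv hinj g]
    exact (integrableOn_congr_fun hpt measurableSet_Ioo).mpr hint
  refine ⟨hint2, ?_⟩
  rw [← himg, integral_image_eq_integral_abs_deriv_smul measurableSet_Ioo hderiv hinj g,
    setIntegral_congr_fun measurableSet_Ioo hpt]
  rw [intervalIntegral.integral_of_le zero_le_one, MeasureTheory.integral_Ioc_eq_integral_Ioo]
    at hval
  exact hval

lemma betaSq {u v : ℝ} (hu : 0 < u) (hv : 0 < v)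
    (hint : IntegrableOn (fun x : ℝ => x ^ (u - 1) * (1 + x) ^ (-(u + v))) (Ioi 0))
    (hval : (∫ x in Ioi (0:ℝ), x ^ (u - 1) * (1 + x) ^ (-(u + v))) =
      Real.Gamma u * Real.Gamma v / Real.Gamma (u + v)) :
    IntegrableOn (fun t : ℝ => t ^ (2 * u - 1) * (1 + t ^ 2) ^ (-(u + v))) (Ioi 0) ∧
    (∫ t in Ioi (0:ℝ), t ^ (2 * u - 1) * (1 + t ^ 2) ^ (-(u + v))) =
      Real.Gamma u * Real.Gamma v / (2 * Real.Gamma (u + v)) := by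
  set g : ℝ → ℝ := fun x => x ^ (u - 1) * (1 + x) ^ (-(u + v)) with hg
  have hderiv : ∀ t ∈ Ioi (0:ℝ),
      HasDerivWithinAt (fun t : ℝ => t ^ 2) (2 * t) (Ioi 0) t := by
    intro t _
    simpa using (hasDerivAt_pow 2 t).hasDerivWithinAt
  have hinj : InjOn (fun t : ℝ => t ^ 2) (Ioi 0) := by
    intro a ha b hb h
    have hab := congrArg Real.sqrt h
    simpa [Real.sqrt_sq (le_of_lt (mem_Ioi.mp ha)), Real.sqrt_sq (le_of_lt (mem_Ioi.mp hb))]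
      using hab
  have himg : (fun t : ℝ => t ^ 2) '' (Ioi 0) = Ioi 0 := by
    ext x
    constructor
    · rintro ⟨t, ht, rfl⟩; exact pow_pos (mem_Ioi.mp ht) 2
    · intro hx
      exact ⟨Real.sqrt x, Real.sqrt_pos.mpr hx, Real.sq_sqrt (le_of_lt hx)⟩
  have hpt : ∀ t ∈ Ioi (0:ℝ),
      |2 * t| • g (t ^ 2) = 2 * (t ^ (2 * u - 1) * (1 + t ^ 2) ^ (-(u + v))) := by
    intro t ht
    have ht' : (0:ℝ) < t := ht
    have e1 : (t ^ 2 : ℝ) ^ (u - 1) = t ^ (2 * (u - 1)) := by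
      rw [← Real.rpow_natCast t 2, ← Real.rpow_mul ht'.le]
      norm_num
    have e2 : t * t ^ (2 * (u - 1)) = t ^ (2 * u - 1) := by
      nth_rewrite 1 [← Real.rpow_one t]
      rw [← Real.rpow_add ht']
      congr 1
      ring
    rw [smul_eq_mul, hg]
    simp only [e1]
    rw [abs_of_nonneg (by linarith : (0:ℝ) ≤ 2 * t)]
    linear_combination 2 * (1 + t ^ 2) ^ (-(u + v)) * e2
  have hI : IntegrableOn (fun t : ℝ => |2 * t| • g (t ^ 2)) (Ioi 0) := by
    rw [← integrableOn_image_iff_integrableOn_abs_deriv_smul measurableSet_Ioi hderiv hinj g,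
      himg]
    exact hint
  have hI2 : IntegrableOn (fun t : ℝ => t ^ (2 * u - 1) * (1 + t ^ 2) ^ (-(u + v)))
      (Ioi 0) := by
    have h2 : IntegrableOn (fun t : ℝ => 2 * (t ^ (2 * u - 1) * (1 + t ^ 2) ^ (-(u + v))))
        (Ioi 0) := (integrableOn_congr_fun hpt measurableSet_Ioi).mp hI
    exact IntegrableOn.congr_fun (h2.const_mul (1/2 : ℝ)) (fun t _ => by ring)
      measurableSet_Ioi
  refine ⟨hI2, ?_⟩
  have hval2 : (∫ t in Ioi (0:ℝ), |2 * t| • g (t ^ 2)) =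
      Real.Gamma u * Real.Gamma v / Real.Gamma (u + v) := by
    rw [← integral_image_eq_integral_abs_deriv_smul measurableSet_Ioi hderiv hinj g, himg]
    exact hval
  rw [setIntegral_congr_fun measurableSet_Ioi hpt, integral_const_mul] at hval2
  have hΓ : Real.Gamma (u + v) ≠ 0 := (Real.Gamma_pos_of_pos (by linarith)).ne'
  have : (∫ t in Ioi (0:ℝ), t ^ (2 * u - 1) * (1 + t ^ 2) ^ (-(u + v))) =
      (Real.Gamma u * Real.Gamma v / Real.Gamma (u + v)) / 2 := by linarith [hval2]
  rw [this, div_div]; ring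

lemma betaSq' {u v : ℝ} (hu : 0 < u) (hv : 0 < v) :
    IntegrableOn (fun t : ℝ => t ^ (2 * u - 1) * (1 + t ^ 2) ^ (-(u + v))) (Ioi 0) ∧
    (∫ t in Ioi (0:ℝ), t ^ (2 * u - 1) * (1 + t ^ 2) ^ (-(u + v))) =
      Real.Gamma u * Real.Gamma v / (2 * Real.Gamma (u + v)) := by
  obtain ⟨h1, h2⟩ := betaIoi hu hv (beta01_integrable hu hv) (beta01 hu hv)
  exact betaSq hu hv h1 h2

section
variable {a : ℝ} (ha1 : -2 < a) (ha2 : a < -1)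
include ha1 ha2

lemma ha0 : a ≠ 0 := by intro h; rw [h] at ha2; norm_num at ha2

-- J₂ : the second integral at scale 1
lemma J2 :
    IntegrableOn (fun t : ℝ => (1 + t ^ 2) ^ (-3 - 1/a) * t ^ (2 + 2/a)) (Ioi 0) ∧
    (∫ t in Ioi (0:ℝ), (1 + t ^ 2) ^ (-3 - 1/a) * t ^ (2 + 2/a)) =
      Real.sqrt π / 4 * (Real.Gamma ((3*a+2)/(2*a)) / Real.Gamma ((3*a+1)/a)) := by
  have ha : a ≠ 0 := ha0 ha1 ha2
  have hu : 0 < (3*a+2)/(2*a) := div_pos_of_neg_of_neg (by linarith) (by linarith)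
  have h := betaSq' hu (by norm_num : (0:ℝ) < 3/2)
  have e1 : 2 * ((3*a+2)/(2*a)) - 1 = 2 + 2/a := by field_simp; ring
  have e2 : -((3*a+2)/(2*a) + 3/2) = -3 - 1/a := by field_simp; ring
  have e3 : (3*a+2)/(2*a) + 3/2 = (3*a+1)/a := by field_simp; ring
  have eΓ : Real.Gamma (3/2 : ℝ) = Real.sqrt π / 2 := by
    rw [show (3/2 : ℝ) = 1/2 + 1 by norm_num, Real.Gamma_add_one (by norm_num),
      Real.Gamma_one_half_eq]
    ring
  rw [e1, e2] at h
  rw [e3, eΓ] at h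
  constructor
  · exact h.1.congr_fun (fun t _ => by ring) measurableSet_Ioi
  · rw [show (∫ t in Ioi (0:ℝ), (1 + t ^ 2) ^ (-3 - 1/a) * t ^ (2 + 2/a)) =
        ∫ t in Ioi (0:ℝ), t ^ (2 + 2/a) * (1 + t ^ 2) ^ (-3 - 1/a) from
      setIntegral_congr_fun measurableSet_Ioi (fun t _ => by ring), h.2]
    ring

-- K : auxiliary integral appearing in the IBP
lemma Kval :
    IntegrableOn (fun t : ℝ => t ^ (2 + 2/a) * (1 + t ^ 2) ^ (-(2 + 1/a))) (Ioi 0) ∧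
    (∫ t in Ioi (0:ℝ), t ^ (2 + 2/a) * (1 + t ^ 2) ^ (-(2 + 1/a))) =
      Real.sqrt π / 2 * (Real.Gamma ((3*a+2)/(2*a)) / Real.Gamma ((2*a+1)/a)) := by
  have ha : a ≠ 0 := ha0 ha1 ha2
  have hu : 0 < (3*a+2)/(2*a) := div_pos_of_neg_of_neg (by linarith) (by linarith)
  have h := betaSq' hu (by norm_num : (0:ℝ) < 1/2)
  have e1 : 2 * ((3*a+2)/(2*a)) - 1 = 2 + 2/a := by field_simp; ring
  have e2 : -((3*a+2)/(2*a) + 1/2) = -(2 + 1/a) := by field_simp; ring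
  have e3 : (3*a+2)/(2*a) + 1/2 = (2*a+1)/a := by field_simp; ring
  rw [e1, e2, e3, Real.Gamma_one_half_eq] at h
  exact ⟨h.1, by rw [h.2]; ring⟩

-- integrability of g (the kernel of the first integral without arctan)
lemma gInt :
    IntegrableOn (fun t : ℝ => t ^ (1 + 2/a) * (1 + t ^ 2) ^ (-(2 + 1/a))) (Ioi 0) := by
  have ha : a ≠ 0 := ha0 ha1 ha2
  have hu : 0 < (a+1)/a := div_pos_of_neg_of_neg (by linarith) (by linarith)
  have h := (betaSq' hu (by norm_num : (0:ℝ) < 1)).1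
  have e1 : 2 * ((a+1)/a) - 1 = 1 + 2/a := by field_simp; ring
  have e2 : -((a+1)/a + 1) = -(2 + 1/a) := by field_simp; ring
  rwa [e1, e2] at h

lemma J1 (hK : (∫ t in Ioi (0:ℝ), t ^ (2 + 2/a) * (1 + t ^ 2) ^ (-(2 + 1/a))) =
      Real.sqrt π / 2 * (Real.Gamma ((3*a+2)/(2*a)) / Real.Gamma ((2*a+1)/a)))
    (hKint : IntegrableOn (fun t : ℝ => t ^ (2 + 2/a) * (1 + t ^ 2) ^ (-(2 + 1/a))) (Ioi 0))
    (hgint : IntegrableOn (fun t : ℝ => t ^ (1 + 2/a) * (1 + t ^ 2) ^ (-(2 + 1/a))) (Ioi 0)) :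
    IntegrableOn (fun t : ℝ =>
      (1 + t ^ 2) ^ (-2 - 1/a) * Real.arctan t * t ^ (1 + 2/a)) (Ioi 0) ∧
    (∫ t in Ioi (0:ℝ), (1 + t ^ 2) ^ (-2 - 1/a) * Real.arctan t * t ^ (1 + 2/a)) =
      a * π / (4 * (a + 1)) -
        a / (2 * (a + 1)) * (Real.sqrt π / 2 *
          (Real.Gamma ((3*a+2)/(2*a)) / Real.Gamma ((2*a+1)/a))) := by
  have ha : a ≠ 0 := by intro h; rw [h] at ha2; norm_num at ha2
  have ha1' : a + 1 ≠ 0 := by intro h; nlinarith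
  set c : ℝ := a / (2 * (a + 1)) with hc
  set q : ℝ := 2 + 2/a with hq
  set r : ℝ := -(1 + 1/a) with hr
  have hqpos : 0 < q := by
    rw [hq]
    have h2a : -2 < 2/a := by
      rw [lt_div_iff_of_neg (show a < 0 by linarith)]
      linarith
    linarith
  set G : ℝ → ℝ := fun t => c * (t ^ q * (1 + t ^ 2) ^ r) with hG
  set g : ℝ → ℝ := fun t => t ^ (1 + 2/a) * (1 + t ^ 2) ^ (-(2 + 1/a)) with hg
  set F : ℝ → ℝ := fun t => Real.arctan t * G t with hF
  set Φ : ℝ → ℝ := fun t => Real.arctan t * g t + G t * (1 + t ^ 2)⁻¹ with hΦ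
  -- derivative of G
  have hdG : ∀ t : ℝ, 0 < t → HasDerivAt G (g t) t := by
    intro t ht
    have h1t : (0:ℝ) < 1 + t ^ 2 := by positivity
    have d1 : HasDerivAt (fun t : ℝ => t ^ q) (q * t ^ (q - 1)) t :=
      Real.hasDerivAt_rpow_const (Or.inl ht.ne')
    have d2 := ((hasDerivAt_pow 2 t).const_add 1).rpow_const (p := r) (Or.inl h1t.ne')
    have d3 := ((d1.mul d2).const_mul c)
    refine d3.congr_deriv (Eq.symm ?_)
    have e1 : t ^ q = t ^ (1 + 2/a) * t := by
      rw [show q = (1 + 2/a) + 1 by rw [hq]; ring, Real.rpow_add_one ht.ne']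
    have e2 : t ^ (q - 1) = t ^ (1 + 2/a) := by
      rw [show q - 1 = 1 + 2/a by rw [hq]; ring]
    have e3 : (1 + t ^ 2) ^ r = (1 + t ^ 2) ^ (-(2 + 1/a)) * (1 + t ^ 2) := by
      rw [show r = -(2 + 1/a) + 1 by rw [hr]; ring, Real.rpow_add_one h1t.ne']
    have e4 : (1 + t ^ 2) ^ (r - 1) = (1 + t ^ 2) ^ (-(2 + 1/a)) := by
      rw [show r - 1 = -(2 + 1/a) by rw [hr]; ring]
    rw [hg]
    simp only [pow_one, Nat.cast_ofNat, e1, e2, e3, e4]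
    simp only [hq, hr, hc]
    field_simp
    ring
  -- derivative of F
  have hdF : ∀ t ∈ Ioi (0:ℝ), HasDerivAt F (Φ t) t := by
    intro t ht
    have := (Real.hasDerivAt_arctan t).mul (hdG t ht)
    refine this.congr_deriv (Eq.symm ?_)
    rw [hΦ]
    ring
  -- continuity of F at 0 from the right
  have hFcont : ContinuousWithinAt F (Ici 0) 0 := by
    apply ContinuousAt.continuousWithinAt
    apply ContinuousAt.mul Real.continuous_arctan.continuousAt
    apply ContinuousAt.mul continuousAt_const
    apply ContinuousAt.mul
    · exact Real.continuousAt_rpow_const 0 q (Or.inr hqpos.le)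
    · apply ContinuousAt.rpow_const (by fun_prop)
      left
      norm_num
  have hF0 : F 0 = 0 := by simp [hF]
  -- limit of G at infinity
  have hGlim : Filter.Tendsto G Filter.atTop (nhds c) := by
    have h1 : Filter.Tendsto (fun t : ℝ => 1 / t ^ 2 + 1) Filter.atTop (nhds 1) := by
      have h0 : Filter.Tendsto (fun t : ℝ => t ^ 2) Filter.atTop Filter.atTop :=
        Filter.tendsto_pow_atTop (two_ne_zero)
      have h0' := h0.inv_tendsto_atTop
      simpa [one_div] using h0'.add_const 1
    have h2 : Filter.Tendsto (fun x : ℝ => c * x ^ r) (nhds 1) (nhds c) := by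
      have := (Real.continuousAt_rpow_const 1 r (Or.inl one_ne_zero)).tendsto
      rw [Real.one_rpow] at this
      simpa using (this.const_mul c)
    apply (h2.comp h1).congr'
    filter_upwards [Filter.eventually_gt_atTop (0:ℝ)] with t ht
    have ht2 : (0:ℝ) < t ^ 2 := by positivity
    have e1 : 1 / t ^ 2 + 1 = (1 + t ^ 2) / t ^ 2 := by field_simp
    have e2 : ((1 + t ^ 2) / t ^ 2 : ℝ) ^ r = (1 + t ^ 2) ^ r / (t ^ 2) ^ r :=
      Real.div_rpow (x := 1 + t ^ 2) (by positivity) ht2.le r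
    have e3 : ((t ^ 2 : ℝ)) ^ r = t ^ (2 * r) := by
      rw [← Real.rpow_natCast t 2, ← Real.rpow_mul ht.le]
      norm_num
    have e4 : t ^ q = (t ^ (2 * r))⁻¹ := by
      rw [← Real.rpow_neg ht.le, show -(2 * r) = q by rw [hr, hq]; ring]
    simp only [Function.comp, e1, e2, e3, hG, e4]
    field_simp
  -- limit of F at infinity
  have hFlim : Filter.Tendsto F Filter.atTop (nhds (π / 2 * c)) := by
    have harc : Filter.Tendsto Real.arctan Filter.atTop (nhds (π / 2)) :=
      Real.tendsto_arctan_atTop.mono_right nhdsWithin_le_nhds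
    exact harc.mul hGlim
  -- nonnegativity of g and bound on G
  have hgnn : ∀ t : ℝ, 0 < t → 0 ≤ g t := by
    intro t ht
    rw [hg]
    positivity
  have hGbd : ∀ t : ℝ, 0 < t → |G t| ≤ |c| := by
    intro t ht
    have h1t : (0:ℝ) < 1 + t ^ 2 := by positivity
    have key : t ^ q * (1 + t ^ 2) ^ r ≤ 1 := by
      have b1 : t ^ q ≤ (1 + t ^ 2) ^ (q / 2) := by
        have : t ^ q = (t ^ 2 : ℝ) ^ (q / 2) := by
          rw [← Real.rpow_natCast t 2, ← Real.rpow_mul ht.le]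
          congr 1
          ring
        rw [this]
        exact Real.rpow_le_rpow (by positivity) (by nlinarith) (le_of_lt (half_pos hqpos))
      have b2 : (1 + t ^ 2) ^ (q / 2) * (1 + t ^ 2) ^ r = 1 := by
        rw [← Real.rpow_add h1t, show q / 2 + r = 0 by rw [hq, hr]; ring, Real.rpow_zero]
      calc t ^ q * (1 + t ^ 2) ^ r ≤ (1 + t ^ 2) ^ (q / 2) * (1 + t ^ 2) ^ r :=
            mul_le_mul_of_nonneg_right b1 (Real.rpow_nonneg h1t.le r)
        _ = 1 := b2
    rw [hG, abs_mul]
    have hnn : 0 ≤ t ^ q * (1 + t ^ 2) ^ r := by positivity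
    rw [abs_of_nonneg hnn]
    nlinarith [abs_nonneg c, key, hnn]
  -- integrability of arctan * g
  have hA : IntegrableOn (fun t : ℝ => Real.arctan t * g t) (Ioi 0) := by
    refine Integrable.mono' (hgint.const_mul (π / 2)) ?_ ?_
    · apply ContinuousOn.aestronglyMeasurable ?_ measurableSet_Ioi
      apply ContinuousOn.mul Real.continuous_arctan.continuousOn
      apply ContinuousOn.mul
      · exact fun t ht => (Real.continuousAt_rpow_const t _ (Or.inl (ne_of_gt ht))).continuousWithinAt
      · exact ContinuousOn.rpow_const (by fun_prop) (fun t _ => Or.inl (by positivity))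
    · filter_upwards [ae_restrict_mem measurableSet_Ioi] with t ht
      have h1 : |Real.arctan t| ≤ π / 2 :=
        abs_le.mpr ⟨(Real.neg_pi_div_two_lt_arctan t).le, (Real.arctan_lt_pi_div_two t).le⟩
      rw [Real.norm_eq_abs, abs_mul, abs_of_nonneg (hgnn t ht)]
      exact mul_le_mul_of_nonneg_right h1 (hgnn t ht)
  -- integrability of G / (1+t²)
  have hB : IntegrableOn (fun t : ℝ => G t * (1 + t ^ 2)⁻¹) (Ioi 0) := by
    refine Integrable.mono' ((integrable_inv_one_add_sq.integrableOn).const_mul |c|) ?_ ?_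
    · apply ContinuousOn.aestronglyMeasurable ?_ measurableSet_Ioi
      apply ContinuousOn.mul
      · apply ContinuousOn.mul continuousOn_const
        apply ContinuousOn.mul
        · exact fun t ht => (Real.continuousAt_rpow_const t _ (Or.inl (ne_of_gt ht))).continuousWithinAt
        · exact ContinuousOn.rpow_const (by fun_prop) (fun t _ => Or.inl (by positivity))
      · exact ContinuousOn.inv₀ (by fun_prop) (fun t _ => by positivity)
    · filter_upwards [ae_restrict_mem measurableSet_Ioi] with t ht
      have h1t : (0:ℝ) < 1 + t ^ 2 := by positivity
      rw [Real.norm_eq_abs, abs_mul, abs_of_nonneg (by positivity : (0:ℝ) ≤ (1 + t ^ 2)⁻¹)]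
      exact mul_le_mul_of_nonneg_right (hGbd t ht) (by positivity)
  have hΦint : IntegrableOn Φ (Ioi 0) := hA.add hB
  -- the FTC on (0,∞)
  have hFTC : (∫ t in Ioi (0:ℝ), Φ t) = π / 2 * c - F 0 :=
    integral_Ioi_of_hasDerivAt_of_tendsto hFcont hdF hΦint hFlim
  rw [hF0, sub_zero] at hFTC
  have hsplit : (∫ t in Ioi (0:ℝ), Φ t) =
      (∫ t in Ioi (0:ℝ), Real.arctan t * g t) + ∫ t in Ioi (0:ℝ), G t * (1 + t ^ 2)⁻¹ :=
    integral_add hA hB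
  -- value of ∫ G/(1+t²)
  have hBval : (∫ t in Ioi (0:ℝ), G t * (1 + t ^ 2)⁻¹) =
      c * (Real.sqrt π / 2 * (Real.Gamma ((3*a+2)/(2*a)) / Real.Gamma ((2*a+1)/a))) := by
    rw [← hK, ← integral_const_mul]
    apply setIntegral_congr_fun measurableSet_Ioi
    intro t ht
    have h1t : (0:ℝ) < 1 + t ^ 2 := by positivity
    have e3 : (1 + t ^ 2) ^ r * (1 + t ^ 2)⁻¹ = (1 + t ^ 2) ^ (-(2 + 1/a)) := by
      rw [← Real.rpow_neg_one (1 + t ^ 2), ← Real.rpow_add h1t,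
        show r + -1 = -(2 + 1/a) by rw [hr]; ring]
    rw [hG]
    simp only []
    rw [mul_assoc, mul_assoc, e3, hq]
  have hAval : (∫ t in Ioi (0:ℝ), Real.arctan t * g t) =
      a * π / (4 * (a + 1)) -
        a / (2 * (a + 1)) * (Real.sqrt π / 2 *
          (Real.Gamma ((3*a+2)/(2*a)) / Real.Gamma ((2*a+1)/a))) := by
    have : (∫ t in Ioi (0:ℝ), Real.arctan t * g t) = π / 2 * c - c * (Real.sqrt π / 2 *
        (Real.Gamma ((3*a+2)/(2*a)) / Real.Gamma ((2*a+1)/a))) := by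
      rw [← hBval]; linarith [hsplit, hFTC]
    rw [this, hc]
    field_simp
    ring
  constructor
  · exact hA.congr_fun (fun t ht => by
      rw [hg, show (-2 - 1/a : ℝ) = -(2 + 1/a) by ring]; ring) measurableSet_Ioi
  · rw [← hAval]
    apply setIntegral_congr_fun measurableSet_Ioi
    intro t ht
    rw [hg, show (-2 - 1/a : ℝ) = -(2 + 1/a) by ring]
    ring

end

/-- for `a ∈ (−2,−1)` and `η > 0`, both integrands below are Lebesgue
integrable on `(0,+∞)` and
`(1/√η)·∫₀^{+∞} (1+ηu²)^{−2−1/a}·arctan(√η·u)·u^{1+2/a} du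
  + (1+2a)·∫₀^{+∞} (1+ηu²)^{−3−1/a}·u^{2+2/a} du
  = η^{−(3a+2)/(2a)}·( aπ/(4(1+a)) − (a√π/(4(a+1)))·Γ((3a+2)/(2a))/Γ((2a+1)/a)
      + (1+2a)·(√π/4)·Γ((3a+2)/(2a))/Γ((3a+1)/a) )`. -/
theorem stmt_15 (a η : ℝ) (ha1 : -2 < a) (ha2 : a < -1) (hη : 0 < η) :
    IntegrableOn (fun u : ℝ =>
      (1 + η * u ^ 2) ^ (-2 - 1 / a) * Real.arctan (Real.sqrt η * u) * u ^ (1 + 2 / a))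
      (Ioi 0) ∧
    IntegrableOn (fun u : ℝ =>
      (1 + η * u ^ 2) ^ (-3 - 1 / a) * u ^ (2 + 2 / a)) (Ioi 0) ∧
    (1 / Real.sqrt η) *
        (∫ u in Ioi (0 : ℝ),
          (1 + η * u ^ 2) ^ (-2 - 1 / a) * Real.arctan (Real.sqrt η * u) *
            u ^ (1 + 2 / a)) +
      (1 + 2 * a) *
        (∫ u in Ioi (0 : ℝ), (1 + η * u ^ 2) ^ (-3 - 1 / a) * u ^ (2 + 2 / a)) =
      η ^ (-(3 * a + 2) / (2 * a)) *
        (a * π / (4 * (1 + a)) -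
          (a * Real.sqrt π / (4 * (a + 1))) *
            (Real.Gamma ((3 * a + 2) / (2 * a)) / Real.Gamma ((2 * a + 1) / a)) +
          (1 + 2 * a) * (Real.sqrt π / 4) *
            (Real.Gamma ((3 * a + 2) / (2 * a)) / Real.Gamma ((3 * a + 1) / a))) := by
  have ha : a ≠ 0 := by intro h; rw [h] at ha2; norm_num at ha2
  have ha1' : a + 1 ≠ 0 := by intro h; nlinarith
  have ha1'' : (1:ℝ) + a ≠ 0 := by intro h; nlinarith
  obtain ⟨hKint, hK⟩ := Kval ha1 ha2
  obtain ⟨hI1, hV1⟩ := J1 ha1 ha2 hK hKint (gInt ha1 ha2)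
  obtain ⟨hI2, hV2⟩ := J2 ha1 ha2
  set c : ℝ := Real.sqrt η with hcdef
  have hc : 0 < c := Real.sqrt_pos.mpr hη
  have hc2 : c ^ 2 = η := Real.sq_sqrt hη.le
  set f₁ : ℝ → ℝ := fun t => (1 + t ^ 2) ^ (-2 - 1/a) * Real.arctan t * t ^ (1 + 2/a)
    with hf₁
  set f₂ : ℝ → ℝ := fun t => (1 + t ^ 2) ^ (-3 - 1/a) * t ^ (2 + 2/a) with hf₂
  -- pointwise identities on Ioi 0
  have hE1 : ∀ u ∈ Ioi (0:ℝ),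
      (1 + η * u ^ 2) ^ (-2 - 1/a) * Real.arctan (c * u) * u ^ (1 + 2/a) =
        c ^ (-(1 + 2/a)) * f₁ (c * u) := by
    intro u hu
    have hu' : (0:ℝ) < u := hu
    have e1 : (c * u) ^ 2 = η * u ^ 2 := by rw [mul_pow, hc2]
    have e2 : (c * u) ^ (1 + 2/a) = c ^ (1 + 2/a) * u ^ (1 + 2/a) :=
      Real.mul_rpow hc.le hu'.le
    have e3 : c ^ (-(1 + 2/a)) * c ^ (1 + 2/a) = 1 := by
      rw [← Real.rpow_add hc, neg_add_cancel, Real.rpow_zero]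
    rw [hf₁]
    simp only [e1, e2]
    linear_combination
      -((1 + η * u ^ 2) ^ (-2 - 1/a) * Real.arctan (c * u) * u ^ (1 + 2/a)) * e3
  have hE2 : ∀ u ∈ Ioi (0:ℝ),
      (1 + η * u ^ 2) ^ (-3 - 1/a) * u ^ (2 + 2/a) =
        c ^ (-(2 + 2/a)) * f₂ (c * u) := by
    intro u hu
    have hu' : (0:ℝ) < u := hu
    have e1 : (c * u) ^ 2 = η * u ^ 2 := by rw [mul_pow, hc2]
    have e2 : (c * u) ^ (2 + 2/a) = c ^ (2 + 2/a) * u ^ (2 + 2/a) :=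
      Real.mul_rpow hc.le hu'.le
    have e3 : c ^ (-(2 + 2/a)) * c ^ (2 + 2/a) = 1 := by
      rw [← Real.rpow_add hc, neg_add_cancel, Real.rpow_zero]
    rw [hf₂]
    simp only [e1, e2]
    linear_combination -((1 + η * u ^ 2) ^ (-3 - 1/a) * u ^ (2 + 2/a)) * e3
  -- integrability
  have hcomp1 : IntegrableOn (fun u : ℝ => f₁ (c * u)) (Ioi 0) := by
    rw [integrableOn_Ioi_comp_mul_left_iff f₁ 0 hc, mul_zero]
    exact hI1
  have hcomp2 : IntegrableOn (fun u : ℝ => f₂ (c * u)) (Ioi 0) := by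
    rw [integrableOn_Ioi_comp_mul_left_iff f₂ 0 hc, mul_zero]
    exact hI2
  have int1 : IntegrableOn (fun u : ℝ =>
      (1 + η * u ^ 2) ^ (-2 - 1/a) * Real.arctan (c * u) * u ^ (1 + 2/a)) (Ioi 0) :=
    IntegrableOn.congr_fun (hcomp1.const_mul (c ^ (-(1 + 2/a))))
      (fun u hu => (hE1 u hu).symm) measurableSet_Ioi
  have int2 : IntegrableOn (fun u : ℝ =>
      (1 + η * u ^ 2) ^ (-3 - 1/a) * u ^ (2 + 2/a)) (Ioi 0) :=
    IntegrableOn.congr_fun (hcomp2.const_mul (c ^ (-(2 + 2/a))))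
      (fun u hu => (hE2 u hu).symm) measurableSet_Ioi
  refine ⟨int1, int2, ?_⟩
  -- compute the two integrals
  have hint1 : (∫ u in Ioi (0:ℝ),
      (1 + η * u ^ 2) ^ (-2 - 1/a) * Real.arctan (c * u) * u ^ (1 + 2/a)) =
      c ^ (-(1 + 2/a)) * (c⁻¹ * ∫ t in Ioi (0:ℝ), f₁ t) := by
    rw [setIntegral_congr_fun measurableSet_Ioi hE1, integral_const_mul,
      integral_comp_mul_left_Ioi f₁ 0 hc, mul_zero, smul_eq_mul]
  have hint2 : (∫ u in Ioi (0:ℝ),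
      (1 + η * u ^ 2) ^ (-3 - 1/a) * u ^ (2 + 2/a)) =
      c ^ (-(2 + 2/a)) * (c⁻¹ * ∫ t in Ioi (0:ℝ), f₂ t) := by
    rw [setIntegral_congr_fun measurableSet_Ioi hE2, integral_const_mul,
      integral_comp_mul_left_Ioi f₂ 0 hc, mul_zero, smul_eq_mul]
  -- scaling constants
  have hβ1 : 1/c * (c ^ (-(1 + 2/a)) * c⁻¹) = η ^ (-(3*a+2)/(2*a)) := by
    rw [← hc2, ← Real.rpow_natCast c 2, ← Real.rpow_mul hc.le, one_div,
      ← Real.rpow_neg_one c, ← Real.rpow_add hc, ← Real.rpow_add hc]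
    congr 1
    push_cast
    field_simp
    ring
  have hβ2 : c ^ (-(2 + 2/a)) * c⁻¹ = η ^ (-(3*a+2)/(2*a)) := by
    rw [← hc2, ← Real.rpow_natCast c 2, ← Real.rpow_mul hc.le,
      ← Real.rpow_neg_one c, ← Real.rpow_add hc]
    congr 1
    push_cast
    field_simp
    ring
  rw [hint1, hint2, hV1, hV2]
  rw [show (1 / c) * (c ^ (-(1 + 2/a)) * (c⁻¹ * (a * π / (4 * (a + 1)) -
      a / (2 * (a + 1)) * (Real.sqrt π / 2 *
        (Real.Gamma ((3*a+2)/(2*a)) / Real.Gamma ((2*a+1)/a)))))) =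
    (1/c * (c ^ (-(1 + 2/a)) * c⁻¹)) * (a * π / (4 * (a + 1)) -
      a / (2 * (a + 1)) * (Real.sqrt π / 2 *
        (Real.Gamma ((3*a+2)/(2*a)) / Real.Gamma ((2*a+1)/a)))) from by ring,
    hβ1]
  rw [show (1 + 2*a) * (c ^ (-(2 + 2/a)) * (c⁻¹ * (Real.sqrt π / 4 *
      (Real.Gamma ((3*a+2)/(2*a)) / Real.Gamma ((3*a+1)/a))))) =
    (c ^ (-(2 + 2/a)) * c⁻¹) * ((1 + 2*a) * (Real.sqrt π / 4 *
      (Real.Gamma ((3*a+2)/(2*a)) / Real.Gamma ((3*a+1)/a)))) from by ring,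
    hβ2]
  rw [← mul_add]
  congr 1
  set R₁ : ℝ := Real.Gamma ((3*a+2)/(2*a)) / Real.Gamma ((2*a+1)/a) with hR₁
  set R₂ : ℝ := Real.Gamma ((3*a+2)/(2*a)) / Real.Gamma ((3*a+1)/a) with hR₂
  field_simp
  ring
end

section
/- Let μ = (a,b,ε₀,ε₁,ε₂) with a ∈ (−2,0) and b ∈ (0,2), set η = √(b/(2−b)) and σ(μ) = (a, 2−b, −η³ε₀, ηε₁, −ε₂/η). Then Φ(σ(μ)) = (−η³ε₀, −ε₋(μ)/η, −ε₊(μ)/η, c₋(μ), c₊(μ)); that is, componentwise: the first component of Φ(σ(μ)) equals −η³ε₀, ε₊(σ(μ)) = −ε₋(μ)/η, ε₋(σ(μ)) = −ε₊(μ)/η, c₊(σ(μ)) = c₋(μ), and c₋(σ(μ)) = c₊(μ). -/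
open Set

/-- The change of parameters `Φ(a,b,ε₀,ε₁,ε₂) = (ε₀, ε₊, ε₋, c₊, c₋)`, where
`ε_± = −ε₂ ∓ 2√(b(a+2)/(a(b−2)))·ε₁` and `c_± = (a+1) ± (1−b)`. -/
noncomputable def Phi (μ : ℝ × ℝ × ℝ × ℝ × ℝ) : ℝ × ℝ × ℝ × ℝ × ℝ :=
  (μ.2.2.1,
   -μ.2.2.2.2 - 2 * Real.sqrt (μ.2.1 * (μ.1 + 2) / (μ.1 * (μ.2.1 - 2))) * μ.2.2.2.1,
   -μ.2.2.2.2 + 2 * Real.sqrt (μ.2.1 * (μ.1 + 2) / (μ.1 * (μ.2.1 - 2))) * μ.2.2.2.1,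
   (μ.1 + 1) + (1 - μ.2.1),
   (μ.1 + 1) - (1 - μ.2.1))

/-- for `μ = (a,b,ε₀,ε₁,ε₂)` with `a ∈ (−2,0)`, `b ∈ (0,2)`,
`η = √(b/(2−b))` and `σ(μ) = (a, 2−b, −η³ε₀, ηε₁, −ε₂/η)`, one has
`Φ(σ(μ)) = (−η³ε₀, −ε₋(μ)/η, −ε₊(μ)/η, c₋(μ), c₊(μ))`. -/
theorem stmt_18 (a b e0 e1 e2 : ℝ) (ha : a ∈ Ioo (-2 : ℝ) 0) (hb : b ∈ Ioo (0 : ℝ) 2) :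
    let η := Real.sqrt (b / (2 - b))
    Phi (a, 2 - b, -η ^ 3 * e0, η * e1, -e2 / η) =
      (-η ^ 3 * e0,
       -(-e2 + 2 * Real.sqrt (b * (a + 2) / (a * (b - 2))) * e1) / η,
       -(-e2 - 2 * Real.sqrt (b * (a + 2) / (a * (b - 2))) * e1) / η,
       (a + 1) - (1 - b),
       (a + 1) + (1 - b)) := by
  obtain ⟨ha1, ha2⟩ := ha
  obtain ⟨hb1, hb2⟩ := hb
  intro η
  have hb2' : 0 < 2 - b := by linarith
  have ha0 : a ≠ 0 := ne_of_lt ha2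
  have hc : (0:ℝ) < b / (2 - b) := div_pos hb1 hb2'
  have hη : 0 < η := Real.sqrt_pos.mpr hc
  have hη2 : η ^ 2 = b / (2 - b) := Real.sq_sqrt hc.le
  have key : Real.sqrt (b * (a + 2) / (a * (b - 2)))
      = η ^ 2 * Real.sqrt ((2 - b) * (a + 2) / (a * (2 - b - 2))) := by
    rw [hη2,
      show (b / (2 - b)) * Real.sqrt ((2 - b) * (a + 2) / (a * (2 - b - 2)))
        = Real.sqrt ((b / (2 - b)) ^ 2 * ((2 - b) * (a + 2) / (a * (2 - b - 2)))) by
        rw [Real.sqrt_mul (by positivity), Real.sqrt_sq hc.le]]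
    congr 1
    have h4 : a * (b - 2) ≠ 0 := mul_ne_zero ha0 (by linarith)
    have h5 : a * (2 - b - 2) ≠ 0 := mul_ne_zero ha0 (by linarith)
    have h6 : b ≠ 0 := ne_of_gt hb1
    have h7 : b - 2 ≠ 0 := by linarith
    have h8 : 2 - b ≠ 0 := by linarith
    rw [show (2:ℝ) - b - 2 = -b by ring]
    field_simp
    ring
  simp only [Phi, Prod.mk.injEq]
  refine ⟨trivial, ?_, ?_, by ring, by ring⟩
  · rw [key]; field_simp; ring
  · rw [key]; field_simp; ring
end
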